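/- arXiv:1911.06728 — 10 statements merged into one kernel-verified Lean document; each statement's English description precedes it below -/
import Mathlib

section
/- Let V:[0,∞)→[0,∞) be lower semi-continuous and nonnegative, and let X be a random vector in ℝ^d. Define Δ(f) = E[V(d(X, Im f))] for a curve f. If a sequence of curves (f_n)_{n≥1} converges uniformly on [0,1] to a curve f, then liminf_{n→∞} Δ(f_n) ≥ Δ(f); that is, the functional Δ is lower semi-continuous for the topology of uniform convergence on C([0,1]). -/
open MeasureTheory Filter
open scoped ENNReal NNReal InnerProductSpace Topology

lemma infDist_image_le_aux {E : Type*} [MetricSpace E] {S : Set ℝ} (hS : S.Nonempty)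
    (x : E) (g h : ℝ → E) {ε : ℝ} (hε : 0 ≤ ε) (hgh : ∀ t ∈ S, dist (g t) (h t) ≤ ε) :
    Metric.infDist x (g '' S) ≤ Metric.infDist x (h '' S) + ε := by
  refine le_of_forall_pos_le_add fun δ hδ => ?_
  have hne : (h '' S).Nonempty := hS.image h
  have hlt : Metric.infDist x (h '' S) < Metric.infDist x (h '' S) + δ := by linarith
  obtain ⟨y, hy, hxy⟩ := (Metric.infDist_lt_iff hne).mp hlt
  obtain ⟨t, htS, rfl⟩ := hy
  have h1 : Metric.infDist x (g '' S) ≤ dist x (g t) :=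
    Metric.infDist_le_dist_of_mem ⟨t, htS, rfl⟩
  have h2 : dist x (g t) ≤ dist x (h t) + dist (h t) (g t) := dist_triangle _ _ _
  have h3 : dist (h t) (g t) ≤ ε := by rw [dist_comm]; exact hgh t htS
  linarith

/-- The distortion functional `Δ(f) = E[V(d(X, Im f))]` is lower
semi-continuous for the topology of uniform convergence on curves: if curves `f n`
converge uniformly on `[0,1]` to a curve `φ`, then `liminf Δ(f n) ≥ Δ(φ)`. -/
theorem statement_1 {d : ℕ} (V : ℝ → ℝ)
    (hV_nonneg : ∀ x ∈ Set.Ici (0:ℝ), 0 ≤ V x)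
    (hV_lsc : LowerSemicontinuousOn V (Set.Ici 0))
    {Ω : Type*} [MeasurableSpace Ω] (P : Measure Ω) [IsProbabilityMeasure P]
    (X : Ω → EuclideanSpace ℝ (Fin d)) (hX : Measurable X)
    (f : ℕ → ℝ → EuclideanSpace ℝ (Fin d)) (φ : ℝ → EuclideanSpace ℝ (Fin d))
    (hf : ∀ n, ContinuousOn (f n) (Set.Icc 0 1)) (hφ : ContinuousOn φ (Set.Icc 0 1))
    (hconv : TendstoUniformlyOn f φ atTop (Set.Icc 0 1)) :
    ∫⁻ ω, ENNReal.ofReal (V (Metric.infDist (X ω) (φ '' Set.Icc 0 1))) ∂P ≤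
      Filter.liminf
        (fun n => ∫⁻ ω, ENNReal.ofReal (V (Metric.infDist (X ω) (f n '' Set.Icc 0 1))) ∂P)
        atTop := by
  have hSne : (Set.Icc (0:ℝ) 1).Nonempty := ⟨0, by norm_num⟩
  -- The extension `W` of `V` is lower semicontinuous on all of ℝ.
  set W : ℝ → ℝ := fun x => V (max x 0) with hW
  have hWlsc : LowerSemicontinuous W := by
    intro a y hy
    have ha : max a 0 ∈ Set.Ici (0:ℝ) := Set.mem_Ici.mpr (le_max_right _ _)
    have h1 := hV_lsc (max a 0) ha y hy
    have htend : Filter.Tendsto (fun x => max x 0) (𝓝 a) (𝓝[Set.Ici 0] (max a 0)) := by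
      refine tendsto_nhdsWithin_of_tendsto_nhds_of_eventually_within _
        ((continuous_id.max continuous_const).tendsto a)
        (Filter.Eventually.of_forall fun x => Set.mem_Ici.mpr (le_max_right _ _))
    exact htend.eventually h1
  have hWmeas : Measurable W := hWlsc.measurable
  have hVW : ∀ (x : EuclideanSpace ℝ (Fin d)) (A : Set (EuclideanSpace ℝ (Fin d))),
      V (Metric.infDist x A) = W (Metric.infDist x A) := by
    intro x A
    simp [hW, max_eq_left Metric.infDist_nonneg]
  -- Pointwise: the distances converge.
  have hdist : ∀ ω, Filter.Tendsto (fun n => Metric.infDist (X ω) (f n '' Set.Icc 0 1))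
      atTop (𝓝 (Metric.infDist (X ω) (φ '' Set.Icc 0 1))) := by
    intro ω
    rw [Metric.tendsto_atTop]
    intro ε hε
    have h2 : (0:ℝ) < ε / 2 := by linarith
    have hev := Metric.tendstoUniformlyOn_iff.mp hconv (ε/2) h2
    rw [Filter.eventually_atTop] at hev
    obtain ⟨N, hN⟩ := hev
    refine ⟨N, fun n hn => ?_⟩
    have hb : ∀ t ∈ Set.Icc (0:ℝ) 1, dist (φ t) (f n t) ≤ ε / 2 :=
      fun t ht => (hN n hn t ht).le
    have hb' : ∀ t ∈ Set.Icc (0:ℝ) 1, dist (f n t) (φ t) ≤ ε / 2 := by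
      intro t ht; rw [dist_comm]; exact hb t ht
    have hle1 := infDist_image_le_aux hSne (X ω) (f n) φ h2.le hb'
    have hle2 := infDist_image_le_aux hSne (X ω) φ (f n) h2.le hb
    rw [Real.dist_eq, abs_lt]
    constructor <;> linarith
  -- Pointwise liminf inequality.
  have key : ∀ ω, ENNReal.ofReal (V (Metric.infDist (X ω) (φ '' Set.Icc 0 1))) ≤
      Filter.liminf (fun n =>
        ENNReal.ofReal (V (Metric.infDist (X ω) (f n '' Set.Icc 0 1)))) atTop := by
    intro ω
    rw [hVW]
    simp_rw [hVW]
    set a := Metric.infDist (X ω) (φ '' Set.Icc 0 1)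
    rw [le_liminf_iff]
    intro b hb
    have hbtop : b ≠ ⊤ := hb.ne_top
    have hba : b.toReal < W a := by
      rcases lt_or_ge b (ENNReal.ofReal (W a)) with h | h
      · exact (ENNReal.lt_ofReal_iff_toReal_lt hbtop).mp hb
      · exact absurd hb (not_lt.mpr h)
    have hev : ∀ᶠ x in 𝓝 a, b.toReal < W x := hWlsc a _ hba
    filter_upwards [(hdist ω).eventually hev] with n hn
    calc b = ENNReal.ofReal b.toReal := (ENNReal.ofReal_toReal hbtop).symm
      _ < ENNReal.ofReal (W (Metric.infDist (X ω) (f n '' Set.Icc 0 1))) := by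
          exact (ENNReal.ofReal_lt_ofReal_iff (lt_of_le_of_lt ENNReal.toReal_nonneg hn)).mpr hn
  -- Measurability
  have hmeas : ∀ n, Measurable fun ω =>
      ENNReal.ofReal (V (Metric.infDist (X ω) (f n '' Set.Icc 0 1))) := by
    intro n
    simp_rw [hVW]
    exact ENNReal.measurable_ofReal.comp (hWmeas.comp
      ((Metric.continuous_infDist_pt _).measurable.comp hX))
  calc ∫⁻ ω, ENNReal.ofReal (V (Metric.infDist (X ω) (φ '' Set.Icc 0 1))) ∂P
      ≤ ∫⁻ ω, Filter.liminf (fun n =>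
          ENNReal.ofReal (V (Metric.infDist (X ω) (f n '' Set.Icc 0 1)))) atTop ∂P :=
        lintegral_mono key
    _ ≤ _ := lintegral_liminf_le hmeas
end

section
/- Let f:[0,1]→ℝ^d be a rectifiable curve. For θ ∈ S^{d−1}, let f_θ:[0,1]→ℝ be defined by f_θ(t) = ⟨θ, f(t)⟩ and let V(f_θ) denote the total variation of f_θ on [0,1]. Then 𝓛(f) = (1/c_d) ∫_{S^{d−1}} V(f_θ) dθ. -/
open MeasureTheory Filter Set
open scoped ENNReal NNReal InnerProductSpace Topology

namespace Statement6Aux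

variable {E : Type*} [PseudoEMetricSpace E]

/-- Sum of `edist`s over the dyadic partition of `[0,1]` of mesh `2^{-N}`. -/
noncomputable def dvar (g : ℝ → E) (N : ℕ) : ℝ≥0∞ :=
  ∑ j ∈ Finset.range (2 ^ N), edist (g ((j : ℝ) / 2 ^ N)) (g (((j : ℝ) + 1) / 2 ^ N))

lemma chain_le (g : ℝ → E) (N m : ℕ) {a : ℕ → ℕ} (ha : Monotone a) (ham : a m ≤ 2 ^ N) :
    ∑ i ∈ Finset.range m, edist (g ((a i : ℝ) / 2 ^ N)) (g ((a (i + 1) : ℝ) / 2 ^ N))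
      ≤ dvar g N := by
  have key : ∀ k, ∑ i ∈ Finset.range k,
      edist (g ((a i : ℝ) / 2 ^ N)) (g ((a (i + 1) : ℝ) / 2 ^ N)) ≤
      ∑ j ∈ Finset.Ico (a 0) (a k), edist (g ((j : ℝ) / 2 ^ N)) (g (((j : ℝ) + 1) / 2 ^ N)) := by
    intro k
    induction k with
    | zero => simp
    | succ k ih =>
      rw [Finset.sum_range_succ,
        ← Finset.sum_Ico_consecutive _ (ha (Nat.zero_le k)) (ha (Nat.le_succ k))]
      refine add_le_add ih ?_
      have h := edist_le_Ico_sum_edist (fun j : ℕ => g ((j : ℝ) / 2 ^ N)) (ha (Nat.le_succ k))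
      refine h.trans (le_of_eq (Finset.sum_congr rfl fun j _ => ?_))
      push_cast
      rfl
  refine (key m).trans (Finset.sum_le_sum_of_subset fun j hj => ?_)
  simp only [Finset.mem_Ico, Finset.mem_range] at *
  exact lt_of_lt_of_le hj.2 ham

lemma dvar_mono (g : ℝ → E) : Monotone (dvar g) := by
  apply monotone_nat_of_le_succ
  intro N
  have h := chain_le g (N + 1) (2 ^ N) (a := fun i => 2 * i)
    (fun i j hij => by simp only; omega) (by simp only [pow_succ]; omega)
  refine le_trans (le_of_eq ?_) h
  apply Finset.sum_congr rfl
  intro j _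
  have h2 : (2 : ℝ) ^ (N + 1) = 2 ^ N * 2 := by ring
  have e1 : ((2 * j : ℕ) : ℝ) / 2 ^ (N + 1) = (j : ℝ) / 2 ^ N := by
    push_cast [h2]; field_simp
  have e2 : ((2 * (j + 1) : ℕ) : ℝ) / 2 ^ (N + 1) = ((j : ℝ) + 1) / 2 ^ N := by
    push_cast [h2]; field_simp
  show edist (g ((j : ℝ) / 2 ^ N)) (g (((j : ℝ) + 1) / 2 ^ N)) =
    edist (g (((2 * j : ℕ) : ℝ) / 2 ^ (N + 1))) (g (((2 * (j + 1) : ℕ) : ℝ) / 2 ^ (N + 1)))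
  rw [e1, e2]

lemma dvar_le_eVariationOn (g : ℝ → E) (N : ℕ) : dvar g N ≤ eVariationOn g (Icc 0 1) := by
  have h2pos : (0 : ℝ) < 2 ^ N := by positivity
  set u : ℕ → ℝ := fun j => min ((j : ℝ) / 2 ^ N) 1 with hu_def
  have hu : Monotone u := fun i j hij => by
    have hc : (i : ℝ) ≤ j := by exact_mod_cast hij
    exact min_le_min (by gcongr) le_rfl
  have us : ∀ j, u j ∈ Icc (0 : ℝ) 1 := fun j =>
    ⟨le_min (by positivity) zero_le_one, min_le_right _ _⟩
  have key := eVariationOn.sum_le (f := g) (n := 2 ^ N) hu us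
  refine le_trans (le_of_eq ?_) key
  apply Finset.sum_congr rfl
  intro j hj
  simp only [Finset.mem_range] at hj
  have hj1 : ((j : ℝ) + 1) / 2 ^ N ≤ 1 := by
    rw [div_le_one h2pos]
    have : (j : ℝ) + 1 ≤ (2 : ℝ) ^ N := by exact_mod_cast Nat.succ_le_of_lt hj
    linarith
  have hj0 : (j : ℝ) / 2 ^ N ≤ 1 := by
    rw [div_le_one h2pos]
    have : (j : ℝ) ≤ (2 : ℝ) ^ N := by exact_mod_cast hj.le
    linarith
  rw [edist_comm]
  have e1 : u (j + 1) = ((j : ℝ) + 1) / 2 ^ N := by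
    simp only [hu_def]; push_cast; rw [min_eq_left hj1]
  have e2 : u j = (j : ℝ) / 2 ^ N := by simp only [hu_def]; rw [min_eq_left hj0]
  rw [e1, e2]

lemma eVariationOn_eq_iSup_dvar (g : ℝ → E) (hg : ContinuousOn g (Icc 0 1)) :
    eVariationOn g (Icc 0 1) = ⨆ N, dvar g N := by
  refine le_antisymm ?_ (iSup_le (dvar_le_eVariationOn g))
  apply iSup_le
  rintro ⟨m, u, hu, us⟩
  dsimp only
  set a : ℕ → ℕ → ℕ := fun N i => ⌊u i * 2 ^ N⌋₊ with ha_def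
  have haM : ∀ N, Monotone (a N) := fun N i j hij =>
    Nat.floor_mono (by have := hu hij; nlinarith [(us i).1, (us j).1, pow_pos (zero_lt_two (α := ℝ)) N])
  have haT : ∀ N, a N m ≤ 2 ^ N := by
    intro N
    have h1 : u m * 2 ^ N ≤ (2 : ℝ) ^ N := by nlinarith [(us m).2, pow_pos (zero_lt_two (α := ℝ)) N]
    calc ⌊u m * 2 ^ N⌋₊ ≤ ⌊((2 ^ N : ℕ) : ℝ)⌋₊ := Nat.floor_mono (by push_cast; exact h1)
    _ = 2 ^ N := Nat.floor_natCast _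
  have hSN : ∀ N, (∑ i ∈ Finset.range m,
      edist (g ((a N i : ℝ) / 2 ^ N)) (g ((a N (i + 1) : ℝ) / 2 ^ N))) ≤ ⨆ K, dvar g K :=
    fun N => (chain_le g N m (haM N) (haT N)).trans (le_iSup _ N)
  have hx : ∀ t ∈ Icc (0 : ℝ) 1,
      Tendsto (fun N : ℕ => (⌊t * 2 ^ N⌋₊ : ℝ) / 2 ^ N) atTop (nhdsWithin t (Icc 0 1)) := by
    intro t ht
    have hmem : ∀ N : ℕ, (⌊t * 2 ^ N⌋₊ : ℝ) / 2 ^ N ∈ Icc (0 : ℝ) 1 := by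
      intro N
      have h2pos : (0 : ℝ) < 2 ^ N := by positivity
      constructor
      · positivity
      · rw [div_le_one h2pos]
        calc (⌊t * 2 ^ N⌋₊ : ℝ) ≤ t * 2 ^ N := Nat.floor_le (by nlinarith [ht.1])
        _ ≤ 2 ^ N := by nlinarith [ht.2]
    have hle : ∀ N : ℕ, (⌊t * 2 ^ N⌋₊ : ℝ) / 2 ^ N ≤ t := by
      intro N
      have h2pos : (0 : ℝ) < 2 ^ N := by positivity
      rw [div_le_iff₀ h2pos]
      exact Nat.floor_le (by nlinarith [ht.1])
    have hge : ∀ N : ℕ, t - (1 / 2 : ℝ) ^ N ≤ (⌊t * 2 ^ N⌋₊ : ℝ) / 2 ^ N := by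
      intro N
      have h2pos : (0 : ℝ) < 2 ^ N := by positivity
      rw [sub_le_iff_le_add, div_add' _ _ _ h2pos.ne']
      rw [le_div_iff₀ h2pos]
      have := Nat.lt_floor_add_one (t * 2 ^ N)
      have hpow : (1 / 2 : ℝ) ^ N * 2 ^ N = 1 := by
        rw [← mul_pow]; norm_num
      nlinarith
    have htt : Tendsto (fun N : ℕ => (⌊t * 2 ^ N⌋₊ : ℝ) / 2 ^ N) atTop (nhds t) := by
      refine tendsto_of_tendsto_of_tendsto_of_le_of_le ?_ tendsto_const_nhds hge hle
      have : Tendsto (fun N : ℕ => (1 / 2 : ℝ) ^ N) atTop (nhds 0) :=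
        tendsto_pow_atTop_nhds_zero_of_lt_one (by norm_num) (by norm_num)
      simpa using tendsto_const_nhds.sub this
    rw [tendsto_nhdsWithin_iff]
    exact ⟨htt, Eventually.of_forall hmem⟩
  have hterm : Tendsto (fun N => ∑ i ∈ Finset.range m,
      edist (g ((a N i : ℝ) / 2 ^ N)) (g ((a N (i + 1) : ℝ) / 2 ^ N))) atTop
      (nhds (∑ i ∈ Finset.range m, edist (g (u i)) (g (u (i + 1))))) := by
    apply tendsto_finset_sum
    intro i _
    exact Tendsto.edist (((hg _ (us i)).tendsto).comp (hx _ (us i)))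
      (((hg _ (us (i + 1))).tendsto).comp (hx _ (us (i + 1))))
  have hfin := le_of_tendsto hterm (Eventually.of_forall hSN)
  refine le_trans (le_of_eq (Finset.sum_congr rfl fun i _ => edist_comm _ _)) hfin



lemma abs_coord_le_norm {m : ℕ} (x : EuclideanSpace ℝ (Fin m)) (i : Fin m) : |x i| ≤ ‖x‖ := by
  rw [EuclideanSpace.norm_eq]
  have h1 : |x i| = Real.sqrt (‖x i‖ ^ 2) := by
    rw [Real.sqrt_sq_eq_abs, Real.norm_eq_abs, abs_abs]
  rw [h1]
  apply Real.sqrt_le_sqrt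
  exact Finset.single_le_sum (f := fun j => ‖x j‖ ^ 2) (fun j _ => by positivity)
    (Finset.mem_univ i)

lemma lipschitzOnWith_normalize {F : Type*} [NormedAddCommGroup F] [NormedSpace ℝ F] :
    LipschitzOnWith 2 (fun x : F => ‖x‖⁻¹ • x) {x : F | 1 ≤ ‖x‖} := by
  apply LipschitzOnWith.of_dist_le_mul
  intro x hx y hy
  simp only [Set.mem_setOf_eq] at hx hy
  have hx0 : (0 : ℝ) < ‖x‖ := lt_of_lt_of_le one_pos hx
  have hy0 : (0 : ℝ) < ‖y‖ := lt_of_lt_of_le one_pos hy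
  have hxinv : ‖x‖⁻¹ ≤ 1 := by
    rw [inv_le_one_iff₀]; right; exact hx
  rw [dist_eq_norm, dist_eq_norm]
  have key : ‖x‖⁻¹ • x - ‖y‖⁻¹ • y = ‖x‖⁻¹ • (x - y) + (‖x‖⁻¹ - ‖y‖⁻¹) • y := by
    rw [smul_sub, sub_smul]; abel
  have h1 : ‖‖x‖⁻¹ • (x - y)‖ ≤ ‖x - y‖ := by
    rw [norm_smul, Real.norm_eq_abs, abs_of_pos (inv_pos.2 hx0)]
    exact mul_le_of_le_one_left (norm_nonneg _) hxinv
  have h2 : ‖(‖x‖⁻¹ - ‖y‖⁻¹) • y‖ ≤ ‖x - y‖ := by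
    rw [norm_smul, Real.norm_eq_abs]
    have e : |‖x‖⁻¹ - ‖y‖⁻¹| * ‖y‖ = |‖x‖ - ‖y‖| * ‖x‖⁻¹ := by
      rw [show ‖x‖⁻¹ - ‖y‖⁻¹ = (‖y‖ - ‖x‖) / (‖x‖ * ‖y‖) by field_simp,
        abs_div, abs_of_pos (mul_pos hx0 hy0), abs_sub_comm]
      field_simp
    rw [e]
    have habs := abs_norm_sub_norm_le x y
    calc |‖x‖ - ‖y‖| * ‖x‖⁻¹ ≤ ‖x - y‖ * 1 := by
          apply mul_le_mul habs hxinv (inv_pos.2 hx0).le (norm_nonneg _)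
    _ = ‖x - y‖ := mul_one _
  have hcoe : ((2 : ℝ≥0) : ℝ) = 2 := by norm_num
  calc ‖‖x‖⁻¹ • x - ‖y‖⁻¹ • y‖ ≤ ‖‖x‖⁻¹ • (x - y)‖ + ‖(‖x‖⁻¹ - ‖y‖⁻¹) • y‖ := by
        rw [key]; exact norm_add_le _ _
  _ ≤ ‖x - y‖ + ‖x - y‖ := add_le_add h1 h2
  _ = ((2 : ℝ≥0) : ℝ) * ‖x - y‖ := by rw [hcoe]; ring

lemma pi_cube_hausdorff {m : ℕ} (a : ℝ) :
    μH[(m : ℝ)] {y : Fin m → ℝ | ∀ k, |y k| ≤ a} = ∏ _k : Fin m, ENNReal.ofReal (2 * a) := by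
  have hset : {y : Fin m → ℝ | ∀ k, |y k| ≤ a} = Set.pi Set.univ (fun _ => Icc (-a) a) := by
    ext y; simp [abs_le, Set.mem_pi, Pi.le_def, forall_and]
  have hμ : (μH[(m : ℝ)] : Measure (Fin m → ℝ)) = volume := by
    have := hausdorffMeasure_pi_real (ι := Fin m)
    simpa using this
  rw [hμ, hset, volume_pi_pi]
  congr 1
  ext _
  rw [Real.volume_Icc]
  congr 1
  ring

lemma eu_cube_lt_top {m : ℕ} :
    μH[(m : ℝ)] {y : EuclideanSpace ℝ (Fin m) | ∀ k, |y k| ≤ 1} < ⊤ := by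
  set C := {y : EuclideanSpace ℝ (Fin m) | ∀ k, |y k| ≤ 1} with hC
  have hanti : AntilipschitzWith _ (WithLp.equiv 2 (Fin m → ℝ)) :=
    PiLp.antilipschitzWith_ofLp 2 (fun _ : Fin m => ℝ)
  have h1 := hanti.le_hausdorffMeasure_image (d := (m : ℝ)) (by positivity) C
  have himg : (WithLp.equiv 2 (∀ _ : Fin m, ℝ)) '' C = {y : Fin m → ℝ | ∀ k, |y k| ≤ 1} := by
    ext y
    rw [Equiv.image_eq_preimage_symm]
    simp only [Set.mem_preimage, hC, Set.mem_setOf_eq, WithLp.equiv_symm_apply, PiLp.toLp_apply]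
  rw [himg, pi_cube_hausdorff] at h1
  refine lt_of_le_of_lt h1 ?_
  apply ENNReal.mul_lt_top
  · exact ENNReal.rpow_lt_top_of_nonneg (by positivity) ENNReal.coe_ne_top
  · exact ENNReal.prod_lt_top fun _ _ => ENNReal.ofReal_lt_top

lemma eu_ball_pos {m : ℕ} :
    0 < μH[(m : ℝ)] (Metric.closedBall (0 : EuclideanSpace ℝ (Fin m)) 1) := by
  set a : ℝ := (1 + Real.sqrt m)⁻¹ with ha
  have hapos : 0 < a := by positivity
  set C := {y : EuclideanSpace ℝ (Fin m) | ∀ k, |y k| ≤ a} with hC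
  have hsub : C ⊆ Metric.closedBall (0 : EuclideanSpace ℝ (Fin m)) 1 := by
    intro y hy
    rw [Metric.mem_closedBall, dist_zero_right, EuclideanSpace.norm_eq]
    have hsum : ∑ i, ‖y i‖ ^ 2 ≤ (m : ℝ) * a ^ 2 := by
      calc ∑ i, ‖y i‖ ^ 2 ≤ ∑ _i : Fin m, a ^ 2 := by
            apply Finset.sum_le_sum
            intro i _
            rw [Real.norm_eq_abs]
            have := hy i
            nlinarith [abs_nonneg (y i)]
      _ = (m : ℝ) * a ^ 2 := by simp [mul_comm]
    have h2 : Real.sqrt ((m : ℝ) * a ^ 2) ≤ 1 := by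
      rw [show (m : ℝ) * a ^ 2 = (Real.sqrt m * a) ^ 2 by
        rw [mul_pow, Real.sq_sqrt (Nat.cast_nonneg m)]]
      rw [Real.sqrt_sq (by positivity)]
      rw [ha]
      rw [inv_eq_one_div, mul_div_assoc', mul_one, div_le_one (by positivity)]
      nlinarith [Real.sqrt_nonneg (m : ℝ)]
    exact le_trans (Real.sqrt_le_sqrt hsum) h2
  refine lt_of_lt_of_le ?_ (measure_mono hsub)
  have hlip : LipschitzWith 1 (WithLp.equiv 2 (Fin m → ℝ)) :=
    PiLp.lipschitzWith_ofLp 2 (fun _ : Fin m => ℝ)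
  have h1 := hlip.hausdorffMeasure_image_le (d := (m : ℝ)) (by positivity) C
  have himg : (WithLp.equiv 2 (∀ _ : Fin m, ℝ)) '' C = {y : Fin m → ℝ | ∀ k, |y k| ≤ a} := by
    ext y
    rw [Equiv.image_eq_preimage_symm]
    simp only [Set.mem_preimage, hC, Set.mem_setOf_eq, WithLp.equiv_symm_apply, PiLp.toLp_apply]
  rw [himg, pi_cube_hausdorff] at h1
  have hpos : 0 < ∏ _k : Fin m, ENNReal.ofReal (2 * a) := by
    rw [CanonicallyOrderedAdd.prod_pos]
    intro _ _
    rw [ENNReal.ofReal_pos]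
    linarith
  calc (0 : ℝ≥0∞) < ∏ _k : Fin m, ENNReal.ofReal (2 * a) := hpos
  _ ≤ (1 : ℝ≥0∞) ^ (m : ℝ) * μH[(m : ℝ)] C := by
      refine le_trans h1 ?_
      gcongr
      exact_mod_cast le_refl _
  _ = μH[(m : ℝ)] C := by rw [ENNReal.one_rpow, one_mul]


lemma lipschitz_insertNth {m : ℕ} (i : Fin (m + 1)) (c : ℝ) :
    LipschitzWith 1 (fun y : EuclideanSpace ℝ (Fin m) =>
      ((WithLp.equiv 2 (∀ _ : Fin (m + 1), ℝ)).symm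
        (i.insertNth c (WithLp.equiv 2 (∀ _ : Fin m, ℝ) y)) :
        EuclideanSpace ℝ (Fin (m + 1)))) := by
  apply LipschitzWith.of_dist_le_mul
  intro y z
  rw [NNReal.coe_one, one_mul, EuclideanSpace.dist_eq, EuclideanSpace.dist_eq]
  apply Real.sqrt_le_sqrt
  rw [Fin.sum_univ_succAbove _ i]
  simp only [WithLp.equiv_symm_apply, PiLp.toLp_apply, Fin.insertNth_apply_same,
    Fin.insertNth_apply_succAbove, dist_self, WithLp.equiv_apply]
  norm_num

lemma lipschitz_castSucc {m : ℕ} :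
    LipschitzWith 1 (fun x : EuclideanSpace ℝ (Fin (m + 1)) =>
      ((WithLp.equiv 2 (∀ _ : Fin m, ℝ)).symm (fun k => x (Fin.castSucc k)) :
        EuclideanSpace ℝ (Fin m))) := by
  apply LipschitzWith.of_dist_le_mul
  intro x y
  rw [NNReal.coe_one, one_mul, EuclideanSpace.dist_eq, EuclideanSpace.dist_eq]
  apply Real.sqrt_le_sqrt
  rw [Fin.sum_univ_castSucc (f := fun j => dist (x j) (y j) ^ 2)]
  simp only [WithLp.equiv_symm_apply, PiLp.toLp_apply]
  have : (0 : ℝ) ≤ dist (x (Fin.last m)) (y (Fin.last m)) ^ 2 := by positivity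
  linarith [Finset.sum_le_sum (s := Finset.univ)
    (fun (k : Fin m) _ => le_refl (dist (x (Fin.castSucc k)) (y (Fin.castSucc k)) ^ 2))]

lemma sphere_lt_top {m : ℕ} :
    μH[(m : ℝ)] (Metric.sphere (0 : EuclideanSpace ℝ (Fin (m + 1))) 1) < ⊤ := by
  classical
  set E := EuclideanSpace ℝ (Fin (m + 1))
  set Nz : E → E := fun x => ‖x‖⁻¹ • x with hNz
  set F : Fin (m + 1) → Bool → Set E := fun i b =>
    {x : E | x i = (if b then 1 else -1) ∧ ∀ j, |x j| ≤ 1} with hF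
  have hcover : Metric.sphere (0 : E) 1 ⊆ ⋃ i, ⋃ b, Nz '' F i b := by
    intro θ hθ
    have hθn : ‖θ‖ = 1 := by rwa [mem_sphere_zero_iff_norm] at hθ
    obtain ⟨i, -, hmax⟩ := Finset.exists_max_image Finset.univ (fun j => |θ j|)
      ⟨0, Finset.mem_univ 0⟩
    have hm : 0 < |θ i| := by
      by_contra h
      push_neg at h
      have hz : θ = 0 := by
        ext j
        have hj := hmax j (Finset.mem_univ j)
        have hj0 : |θ j| ≤ 0 := le_trans hj h
        simpa [abs_nonpos_iff] using hj0
      rw [hz] at hθn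
      simp at hθn
    set mm : ℝ := |θ i| with hmm
    set x : E := mm⁻¹ • θ with hx
    set b : Bool := decide (0 ≤ θ i) with hb
    refine Set.mem_iUnion.2 ⟨i, Set.mem_iUnion.2 ⟨b, ⟨x, ⟨?_, ?_⟩, ?_⟩⟩⟩
    · -- x i = ±1
      have hxi : x i = mm⁻¹ * θ i := by rw [hx]; rfl
      by_cases hpos : 0 ≤ θ i
      · have he : mm = θ i := abs_of_nonneg hpos
        have hne : θ i ≠ 0 := by rw [← he]; exact hm.ne'
        simp [hb, hpos, hxi, he, inv_mul_cancel₀ hne]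
      · have hneg : θ i < 0 := lt_of_not_ge hpos
        have hne : θ i ≠ 0 := hneg.ne
        have he : mm = -θ i := abs_of_neg hneg
        have hbf : b = false := by simp [hb, hpos]
        rw [hbf, hxi, he]
        simp only [Bool.false_eq_true, if_false]
        rw [inv_neg, neg_mul, inv_mul_cancel₀ hne]
    · -- coords bounded
      intro j
      have hxj : x j = mm⁻¹ * θ j := by rw [hx]; rfl
      rw [hxj, abs_mul, abs_of_pos (inv_pos.2 hm)]
      rw [inv_mul_le_iff₀ hm, mul_one]
      exact hmax j (Finset.mem_univ j)
    · -- Nz x = θ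
      have hxn : ‖x‖ = mm⁻¹ := by
        rw [hx, norm_smul, Real.norm_eq_abs, abs_of_pos (inv_pos.2 hm), hθn, mul_one]
      rw [hNz]
      show ‖x‖⁻¹ • x = θ
      rw [hxn, inv_inv, hx, smul_smul, mul_inv_cancel₀ hm.ne', one_smul]
  refine lt_of_le_of_lt (measure_mono hcover) ?_
  refine lt_of_le_of_lt (measure_iUnion_le _) ?_
  rw [tsum_fintype]
  refine ENNReal.sum_lt_top.2 fun i _ => ?_
  refine lt_of_le_of_lt (measure_iUnion_le _) ?_
  rw [tsum_fintype]
  refine ENNReal.sum_lt_top.2 fun b _ => ?_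
  -- each piece
  have hFsub : F i b ⊆ {x : E | 1 ≤ ‖x‖} := by
    intro x hx
    have h1 : |x i| = 1 := by
      rcases hx with ⟨h, -⟩
      cases b <;> simp [h]
    have := abs_coord_le_norm x i
    rw [h1] at this
    exact this
  have hlip : LipschitzOnWith 2 Nz (F i b) := lipschitzOnWith_normalize.mono hFsub
  have h1 := hlip.hausdorffMeasure_image_le (d := (m : ℝ)) (by positivity)
  refine lt_of_le_of_lt h1 ?_
  apply ENNReal.mul_lt_top
  · exact ENNReal.rpow_lt_top_of_nonneg (by positivity) ENNReal.coe_ne_top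
  -- μH (F i b) < ⊤ : F i b ⊆ insertNth image of cube
  set c : ℝ := if b then 1 else -1 with hc
  set ι : EuclideanSpace ℝ (Fin m) → E := fun y =>
    ((WithLp.equiv 2 (∀ _ : Fin (m + 1), ℝ)).symm
      (i.insertNth c (WithLp.equiv 2 (∀ _ : Fin m, ℝ) y))) with hι
  have hFsub2 : F i b ⊆ ι '' {y : EuclideanSpace ℝ (Fin m) | ∀ k, |y k| ≤ 1} := by
    intro x hx
    rcases hx with ⟨hxi, hxj⟩
    refine ⟨(WithLp.equiv 2 (∀ _ : Fin m, ℝ)).symm (i.removeNth fun j => x j), fun k => ?_, ?_⟩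
    · simp only [WithLp.equiv_symm_apply, PiLp.toLp_apply, Fin.removeNth]
      exact hxj _
    · rw [hι]
      simp only [Equiv.apply_symm_apply]
      have : i.insertNth c (i.removeNth fun j => x j) = fun j => x j := by
        rw [hc, ← hxi]
        exact Fin.insertNth_self_removeNth i _
      ext j
      simp only [WithLp.equiv_symm_apply, PiLp.toLp_apply]
      rw [this]
  refine lt_of_le_of_lt (measure_mono hFsub2) ?_
  have h2 := (lipschitz_insertNth i c).hausdorffMeasure_image_le (d := (m : ℝ)) (by positivity)
    {y : EuclideanSpace ℝ (Fin m) | ∀ k, |y k| ≤ 1}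
  refine lt_of_le_of_lt h2 ?_
  apply ENNReal.mul_lt_top
  · exact ENNReal.rpow_lt_top_of_nonneg (by positivity) ENNReal.coe_ne_top
  · exact eu_cube_lt_top

lemma sphere_pos {m : ℕ} :
    0 < μH[(m : ℝ)] (Metric.sphere (0 : EuclideanSpace ℝ (Fin (m + 1))) 1) := by
  set E := EuclideanSpace ℝ (Fin (m + 1))
  set π : E → EuclideanSpace ℝ (Fin m) := fun x =>
    (WithLp.equiv 2 (∀ _ : Fin m, ℝ)).symm (fun k => x (Fin.castSucc k)) with hπ
  have hsub : Metric.closedBall (0 : EuclideanSpace ℝ (Fin m)) 1 ⊆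
      π '' Metric.sphere (0 : E) 1 := by
    intro y hy
    rw [Metric.mem_closedBall, dist_zero_right] at hy
    set t : ℝ := Real.sqrt (1 - ‖y‖ ^ 2) with ht
    have hy2 : ∑ k, ‖y k‖ ^ 2 = ‖y‖ ^ 2 := by
      rw [EuclideanSpace.norm_eq, Real.sq_sqrt]
      positivity
    set θ : E := (WithLp.equiv 2 (∀ _ : Fin (m + 1), ℝ)).symm
      (Fin.snoc (fun k => y k) t) with hθ
    have hθc : ∀ k : Fin m, θ (Fin.castSucc k) = y k := by
      intro k
      simp only [hθ, WithLp.equiv_symm_apply, PiLp.toLp_apply]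
      exact Fin.snoc_castSucc _ _ _
    have hθl : θ (Fin.last m) = t := by
      simp only [hθ, WithLp.equiv_symm_apply, PiLp.toLp_apply]
      exact Fin.snoc_last _ _
    refine ⟨θ, ?_, ?_⟩
    · rw [mem_sphere_zero_iff_norm, EuclideanSpace.norm_eq]
      rw [Fin.sum_univ_castSucc (f := fun j => ‖θ j‖ ^ 2)]
      have hsq : ‖θ (Fin.last m)‖ ^ 2 = 1 - ‖y‖ ^ 2 := by
        rw [hθl, Real.norm_eq_abs, sq_abs, ht, Real.sq_sqrt]
        nlinarith [norm_nonneg y]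
      have hsum : ∑ k : Fin m, ‖θ (Fin.castSucc k)‖ ^ 2 = ‖y‖ ^ 2 := by
        rw [← hy2]
        exact Finset.sum_congr rfl fun k _ => by rw [hθc k]
      rw [hsum, hsq]
      norm_num
    · ext k
      exact hθc k
  have hlip := lipschitz_castSucc (m := m)
  have h1 := hlip.hausdorffMeasure_image_le (d := (m : ℝ)) (by positivity)
    (Metric.sphere (0 : E) 1)
  have h2 : μH[(m : ℝ)] (Metric.closedBall (0 : EuclideanSpace ℝ (Fin m)) 1) ≤
      μH[(m : ℝ)] (Metric.sphere (0 : E) 1) := by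
    refine le_trans (measure_mono hsub) (le_trans h1 ?_)
    rw [ENNReal.coe_one, ENNReal.one_rpow, one_mul]
  exact lt_of_lt_of_le eu_ball_pos h2



lemma meas_inner {m : ℕ} (w : EuclideanSpace ℝ (Fin m)) :
    Measurable fun θ : EuclideanSpace ℝ (Fin m) => ENNReal.ofReal |⟪θ, w⟫_ℝ| := by
  apply ENNReal.measurable_ofReal.comp
  apply Measurable.abs
  have h : (fun θ : EuclideanSpace ℝ (Fin m) => ⟪θ, w⟫_ℝ) = fun θ => ⟪w, θ⟫_ℝ := by
    funext θ; exact real_inner_comm _ _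
  rw [h]
  exact (innerSL ℝ w).continuous.measurable

lemma meas_edist {m : ℕ} (a b : EuclideanSpace ℝ (Fin m)) :
    Measurable fun θ : EuclideanSpace ℝ (Fin m) => edist (⟪θ, a⟫_ℝ) (⟪θ, b⟫_ℝ) := by
  have h : (fun θ : EuclideanSpace ℝ (Fin m) => edist (⟪θ, a⟫_ℝ) (⟪θ, b⟫_ℝ)) =
      fun θ => ENNReal.ofReal |⟪θ, a - b⟫_ℝ| := by
    funext θ
    rw [edist_dist, Real.dist_eq, inner_sub_right]
  rw [h]
  exact meas_inner _

lemma invariance {m : ℕ} (u e : EuclideanSpace ℝ (Fin (m + 1))) (hu : ‖u‖ = 1)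
    (he : ‖e‖ = 1) :
    ∫⁻ θ in Metric.sphere (0 : EuclideanSpace ℝ (Fin (m + 1))) 1,
        ENNReal.ofReal |⟪θ, u⟫_ℝ| ∂(μH[(m : ℝ)]) =
    ∫⁻ θ in Metric.sphere (0 : EuclideanSpace ℝ (Fin (m + 1))) 1,
        ENNReal.ofReal |⟪θ, e⟫_ℝ| ∂(μH[(m : ℝ)]) := by
  set R := Submodule.reflection (ℝ ∙ (e - u))ᗮ with hR
  have hRe : R e = u := Submodule.reflection_sub (by rw [he, hu])
  have hmp : MeasurePreserving (⇑R) (μH[(m : ℝ)]) (μH[(m : ℝ)]) :=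
    R.toIsometryEquiv.measurePreserving_hausdorffMeasure (m : ℝ)
  have hemb : MeasurableEmbedding (⇑R) := R.toHomeomorph.measurableEmbedding
  have hpre : (⇑R) ⁻¹' (Metric.sphere (0 : EuclideanSpace ℝ (Fin (m + 1))) 1) =
      Metric.sphere (0 : EuclideanSpace ℝ (Fin (m + 1))) 1 := by
    ext x
    simp only [Set.mem_preimage, mem_sphere_zero_iff_norm, R.norm_map]
  have key := hmp.setLIntegral_comp_preimage_emb hemb
    (fun θ => ENNReal.ofReal |⟪θ, u⟫_ℝ|) (Metric.sphere 0 1)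
  rw [hpre] at key
  rw [← key]
  apply lintegral_congr
  intro x
  rw [← hRe, LinearIsometryEquiv.inner_map_map]

lemma scaling {m : ℕ} (e : EuclideanSpace ℝ (Fin (m + 1))) (he : ‖e‖ = 1)
    (v : EuclideanSpace ℝ (Fin (m + 1))) :
    ∫⁻ θ in Metric.sphere (0 : EuclideanSpace ℝ (Fin (m + 1))) 1,
        ENNReal.ofReal |⟪θ, v⟫_ℝ| ∂(μH[(m : ℝ)]) =
    (∫⁻ θ in Metric.sphere (0 : EuclideanSpace ℝ (Fin (m + 1))) 1,
        ENNReal.ofReal |⟪θ, e⟫_ℝ| ∂(μH[(m : ℝ)])) * ENNReal.ofReal ‖v‖ := by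
  by_cases hv : v = 0
  · simp [hv, inner_zero_right]
  · have hvn : (0 : ℝ) < ‖v‖ := norm_pos_iff.2 hv
    set u : EuclideanSpace ℝ (Fin (m + 1)) := ‖v‖⁻¹ • v with hu_def
    have hu : ‖u‖ = 1 := by
      rw [hu_def, norm_smul, Real.norm_eq_abs, abs_of_pos (inv_pos.2 hvn),
        inv_mul_cancel₀ hvn.ne']
    have hrw : ∀ θ : EuclideanSpace ℝ (Fin (m + 1)),
        ENNReal.ofReal |⟪θ, v⟫_ℝ| = ENNReal.ofReal ‖v‖ * ENNReal.ofReal |⟪θ, u⟫_ℝ| := by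
      intro θ
      have hiu : ⟪θ, u⟫_ℝ = ‖v‖⁻¹ * ⟪θ, v⟫_ℝ := by
        rw [hu_def, real_inner_smul_right]
      rw [← ENNReal.ofReal_mul (norm_nonneg v)]
      congr 1
      rw [hiu, abs_mul, abs_of_pos (inv_pos.2 hvn)]
      field_simp
    simp_rw [hrw]
    rw [lintegral_const_mul' _ _ ENNReal.ofReal_ne_top, invariance u e hu he]
    ring

lemma key_edist {m : ℕ} (e : EuclideanSpace ℝ (Fin (m + 1))) (he : ‖e‖ = 1)
    (a b : EuclideanSpace ℝ (Fin (m + 1))) :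
    ∫⁻ θ in Metric.sphere (0 : EuclideanSpace ℝ (Fin (m + 1))) 1,
        edist (⟪θ, a⟫_ℝ) (⟪θ, b⟫_ℝ) ∂(μH[(m : ℝ)]) =
    (∫⁻ θ in Metric.sphere (0 : EuclideanSpace ℝ (Fin (m + 1))) 1,
        ENNReal.ofReal |⟪θ, e⟫_ℝ| ∂(μH[(m : ℝ)])) * edist a b := by
  have h1 : ∀ θ : EuclideanSpace ℝ (Fin (m + 1)),
      edist (⟪θ, a⟫_ℝ) (⟪θ, b⟫_ℝ) = ENNReal.ofReal |⟪θ, a - b⟫_ℝ| := by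
    intro θ
    rw [edist_dist, Real.dist_eq, inner_sub_right]
  simp_rw [h1]
  rw [scaling e he (a - b), edist_dist, dist_eq_norm]

lemma const_lt_top {m : ℕ} (e : EuclideanSpace ℝ (Fin (m + 1))) (he : ‖e‖ = 1) :
    (∫⁻ θ in Metric.sphere (0 : EuclideanSpace ℝ (Fin (m + 1))) 1,
      ENNReal.ofReal |⟪θ, e⟫_ℝ| ∂(μH[(m : ℝ)])) < ⊤ := by
  have h1 : (∫⁻ θ in Metric.sphere (0 : EuclideanSpace ℝ (Fin (m + 1))) 1,
      ENNReal.ofReal |⟪θ, e⟫_ℝ| ∂(μH[(m : ℝ)])) ≤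
      ∫⁻ _θ in Metric.sphere (0 : EuclideanSpace ℝ (Fin (m + 1))) 1, 1 ∂(μH[(m : ℝ)]) := by
    apply setLIntegral_mono' Metric.isClosed_sphere.measurableSet
    intro θ hθ
    rw [mem_sphere_zero_iff_norm] at hθ
    apply ENNReal.ofReal_le_one.2
    calc |⟪θ, e⟫_ℝ| ≤ ‖θ‖ * ‖e‖ := abs_real_inner_le_norm θ e
    _ = 1 := by rw [hθ, he, one_mul]
  rw [setLIntegral_one] at h1
  exact lt_of_le_of_lt h1 sphere_lt_top

lemma const_pos {m : ℕ} (e : EuclideanSpace ℝ (Fin (m + 1))) (he : ‖e‖ = 1) :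
    0 < ∫⁻ θ in Metric.sphere (0 : EuclideanSpace ℝ (Fin (m + 1))) 1,
      ENNReal.ofReal |⟪θ, e⟫_ℝ| ∂(μH[(m : ℝ)]) := by
  rcases eq_or_lt_of_le (zero_le : (0 : ℝ≥0∞) ≤ (∫⁻ θ in Metric.sphere (0 : EuclideanSpace ℝ (Fin (m + 1))) 1,
      ENNReal.ofReal |⟪θ, e⟫_ℝ| ∂(μH[(m : ℝ)]))) with hc0 | h
  · exfalso
    have hbound : μH[(m : ℝ)] (Metric.sphere (0 : EuclideanSpace ℝ (Fin (m + 1))) 1) ≤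
        ∑ i : Fin (m + 1), ∫⁻ θ in Metric.sphere (0 : EuclideanSpace ℝ (Fin (m + 1))) 1,
          ENNReal.ofReal |⟪θ, EuclideanSpace.single i (1 : ℝ)⟫_ℝ| ∂(μH[(m : ℝ)]) := by
      rw [← setLIntegral_one, ← lintegral_finset_sum' Finset.univ
        (fun i _ => (meas_inner (EuclideanSpace.single i (1 : ℝ))).aemeasurable)]
      apply setLIntegral_mono' Metric.isClosed_sphere.measurableSet
      intro θ hθ
      rw [mem_sphere_zero_iff_norm] at hθ
      have h1 : ∀ i : Fin (m + 1), ⟪θ, EuclideanSpace.single i (1 : ℝ)⟫_ℝ = θ i := by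
        intro i
        rw [EuclideanSpace.inner_single_right]
        simp
      have h2 : (1 : ℝ) ≤ ∑ i, |θ i| := by
        have h3 : ‖θ‖ ≤ ∑ i, |θ i| := by
          rw [EuclideanSpace.norm_eq]
          have h4 : ∑ i, ‖θ i‖ ^ 2 ≤ (∑ i, ‖θ i‖) ^ 2 :=
            Finset.sum_sq_le_sq_sum_of_nonneg fun i _ => norm_nonneg _
          calc Real.sqrt (∑ i, ‖θ i‖ ^ 2) ≤ Real.sqrt ((∑ i, ‖θ i‖) ^ 2) :=
                Real.sqrt_le_sqrt h4
          _ = ∑ i, ‖θ i‖ := Real.sqrt_sq (Finset.sum_nonneg fun i _ => norm_nonneg _)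
          _ = ∑ i, |θ i| := Finset.sum_congr rfl fun i _ => Real.norm_eq_abs _
        rw [hθ] at h3
        exact h3
      calc (1 : ℝ≥0∞) = ENNReal.ofReal (1 : ℝ) := ENNReal.ofReal_one.symm
      _ ≤ ENNReal.ofReal (∑ i, |θ i|) := ENNReal.ofReal_le_ofReal h2
      _ = ∑ i, ENNReal.ofReal |θ i| :=
          ENNReal.ofReal_sum_of_nonneg fun i _ => abs_nonneg _
      _ = ∑ i, ENNReal.ofReal |⟪θ, EuclideanSpace.single i (1 : ℝ)⟫_ℝ| :=
          Finset.sum_congr rfl fun i _ => by rw [h1 i]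
    have hzero : ∀ i : Fin (m + 1),
        (∫⁻ θ in Metric.sphere (0 : EuclideanSpace ℝ (Fin (m + 1))) 1,
          ENNReal.ofReal |⟪θ, EuclideanSpace.single i (1 : ℝ)⟫_ℝ| ∂(μH[(m : ℝ)])) = 0 := by
      intro i
      rw [invariance (EuclideanSpace.single i (1 : ℝ)) e (by
        rw [EuclideanSpace.norm_single]; norm_num) he]
      exact hc0.symm
    rw [Finset.sum_congr rfl fun i _ => hzero i] at hbound
    simp only [Finset.sum_const_zero, nonpos_iff_eq_zero] at hbound
    exact absurd hbound sphere_pos.ne'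
  · exact h

end Statement6Aux

open Statement6Aux

/-- For a rectifiable curve `f : [0,1] → ℝ^d`, with
`f_θ(t) = ⟪θ, f t⟫` and `V(f_θ)` the total variation of `f_θ` on `[0,1]`,
one has `𝓛(f) = (1/c_d) ∫_{S^{d-1}} V(f_θ) dθ`, where the surface measure on the
sphere is the `(d-1)`-dimensional Hausdorff measure restricted to it and
`c_d = ∫_{S^{d-1}} |⟪θ,e⟫| dθ` for a unit vector `e`. -/
theorem statement_6 {d : ℕ}
    (e : EuclideanSpace ℝ (Fin d)) (he : ‖e‖ = 1)
    (f : ℝ → EuclideanSpace ℝ (Fin d)) (hf : ContinuousOn f (Set.Icc 0 1))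
    (hrect : eVariationOn f (Set.Icc 0 1) ≠ ⊤) :
    eVariationOn f (Set.Icc 0 1) =
      (∫⁻ θ in Metric.sphere (0 : EuclideanSpace ℝ (Fin d)) 1,
          ENNReal.ofReal |⟪θ, e⟫_ℝ| ∂(μH[(d : ℝ) - 1]))⁻¹ *
        ∫⁻ θ in Metric.sphere (0 : EuclideanSpace ℝ (Fin d)) 1,
          eVariationOn (fun t => ⟪θ, f t⟫_ℝ) (Set.Icc 0 1) ∂(μH[(d : ℝ) - 1]) := by
  cases d with
  | zero =>
    exfalso
    have h0 : ‖e‖ = 0 := by rw [EuclideanSpace.norm_eq]; simp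
    rw [h0] at he
    norm_num at he
  | succ m =>
    have hcast : ((m + 1 : ℕ) : ℝ) - 1 = (m : ℝ) := by push_cast; ring
    rw [hcast]
    have hfθ : ∀ θ : EuclideanSpace ℝ (Fin (m + 1)),
        ContinuousOn (fun t => ⟪θ, f t⟫_ℝ) (Set.Icc 0 1) := by
      intro θ
      have h : (fun t => ⟪θ, f t⟫_ℝ) = fun t => ⟪f t, θ⟫_ℝ := by
        funext t; exact real_inner_comm _ _
      rw [h]
      exact ((innerSL ℝ θ).continuous.comp_continuousOn hf).congr
        (fun t _ => real_inner_comm _ _)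
    have big : (∫⁻ θ in Metric.sphere (0 : EuclideanSpace ℝ (Fin (m + 1))) 1,
        eVariationOn (fun t => ⟪θ, f t⟫_ℝ) (Set.Icc 0 1) ∂(μH[(m : ℝ)])) =
        (∫⁻ θ in Metric.sphere (0 : EuclideanSpace ℝ (Fin (m + 1))) 1,
          ENNReal.ofReal |⟪θ, e⟫_ℝ| ∂(μH[(m : ℝ)])) * eVariationOn f (Set.Icc 0 1) := by
      calc (∫⁻ θ in Metric.sphere (0 : EuclideanSpace ℝ (Fin (m + 1))) 1,
          eVariationOn (fun t => ⟪θ, f t⟫_ℝ) (Set.Icc 0 1) ∂(μH[(m : ℝ)])) =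
          ∫⁻ θ in Metric.sphere (0 : EuclideanSpace ℝ (Fin (m + 1))) 1,
            ⨆ N, dvar (fun t => ⟪θ, f t⟫_ℝ) N ∂(μH[(m : ℝ)]) := by
            apply lintegral_congr
            intro θ
            exact eVariationOn_eq_iSup_dvar _ (hfθ θ)
      _ = ⨆ N, ∫⁻ θ in Metric.sphere (0 : EuclideanSpace ℝ (Fin (m + 1))) 1,
            dvar (fun t => ⟪θ, f t⟫_ℝ) N ∂(μH[(m : ℝ)]) := by
            apply lintegral_iSup
            · intro N
              apply Finset.measurable_sum
              intro j _
              exact meas_edist _ _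
            · intro N M hNM θ
              exact dvar_mono _ hNM
      _ = ⨆ N, ∑ j ∈ Finset.range (2 ^ N),
            ∫⁻ θ in Metric.sphere (0 : EuclideanSpace ℝ (Fin (m + 1))) 1,
              edist (⟪θ, f ((j : ℝ) / 2 ^ N)⟫_ℝ) (⟪θ, f (((j : ℝ) + 1) / 2 ^ N)⟫_ℝ)
              ∂(μH[(m : ℝ)]) := by
            refine iSup_congr fun N => ?_
            exact lintegral_finset_sum' _ (fun j _ => (meas_edist _ _).aemeasurable)
      _ = ⨆ N, ∑ j ∈ Finset.range (2 ^ N),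
            (∫⁻ θ in Metric.sphere (0 : EuclideanSpace ℝ (Fin (m + 1))) 1,
              ENNReal.ofReal |⟪θ, e⟫_ℝ| ∂(μH[(m : ℝ)])) *
              edist (f ((j : ℝ) / 2 ^ N)) (f (((j : ℝ) + 1) / 2 ^ N)) := by
            refine iSup_congr fun N => Finset.sum_congr rfl fun j _ => ?_
            exact key_edist e he _ _
      _ = ⨆ N, (∫⁻ θ in Metric.sphere (0 : EuclideanSpace ℝ (Fin (m + 1))) 1,
            ENNReal.ofReal |⟪θ, e⟫_ℝ| ∂(μH[(m : ℝ)])) * dvar f N := by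
            refine iSup_congr fun N => ?_
            rw [dvar, Finset.mul_sum]
      _ = (∫⁻ θ in Metric.sphere (0 : EuclideanSpace ℝ (Fin (m + 1))) 1,
            ENNReal.ofReal |⟪θ, e⟫_ℝ| ∂(μH[(m : ℝ)])) * ⨆ N, dvar f N :=
            (ENNReal.mul_iSup _ _).symm
      _ = (∫⁻ θ in Metric.sphere (0 : EuclideanSpace ℝ (Fin (m + 1))) 1,
            ENNReal.ofReal |⟪θ, e⟫_ℝ| ∂(μH[(m : ℝ)])) * eVariationOn f (Set.Icc 0 1) := by
            rw [← eVariationOn_eq_iSup_dvar f hf]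
    rw [big, ← mul_assoc, ENNReal.inv_mul_cancel (const_pos e he).ne' (const_lt_top e he).ne,
      one_mul]
end

section
/- Let f:[0,1]→ℝ^d be a rectifiable curve. For θ ∈ S^{d−1}, r ∈ [0,∞) and a Borel subset A of Im f, set N_{θ,r}(A) = Card(A ∩ D_{θ,r}) ∈ ℕ ∪ {∞}. Then for every Borel subset A of Im f, the function (θ,r) ↦ N_{θ,r}(A) on S^{d−1} × [0,∞) is measurable with respect to the Lebesgue-completed σ-algebra (of the product of the surface measure on S^{d−1} and Lebesgue measure on [0,∞)). -/
open MeasureTheory Filter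
open scoped ENNReal NNReal InnerProductSpace Topology

namespace Statement8Aux

/-- Level-`n` dyadic cube index of a point of `ℝ^d`. -/
noncomputable def cfl (d n : ℕ) (z : EuclideanSpace ℝ (Fin d)) : Fin d → ℤ :=
  fun i => ⌊(2 ^ n : ℝ) * z i⌋

lemma cfl_sep {d : ℕ} {z w : EuclideanSpace ℝ (Fin d)} (h : z ≠ w) :
    ∃ N : ℕ, ∀ n, N ≤ n → cfl d n z ≠ cfl d n w := by
  have hi : ∃ i, z i ≠ w i := by
    by_contra hc
    push_neg at hc
    exact h (PiLp.ext hc)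
  obtain ⟨i, hi⟩ := hi
  have he : 0 < |z i - w i| := abs_pos.mpr (sub_ne_zero.mpr hi)
  obtain ⟨N, hN⟩ := pow_unbounded_of_one_lt (|z i - w i|)⁻¹ (one_lt_two (α := ℝ))
  refine ⟨N, fun n hn hc => ?_⟩
  have h1 : ⌊(2 ^ n : ℝ) * z i⌋ = ⌊(2 ^ n : ℝ) * w i⌋ := congrFun hc i
  have h2 : |(2 ^ n : ℝ) * z i - (2 ^ n : ℝ) * w i| < 1 :=
    Int.abs_sub_lt_one_of_floor_eq_floor h1
  rw [← mul_sub, abs_mul, abs_of_pos (pow_pos (two_pos) n)] at h2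
  have h3 : (1 : ℝ) < 2 ^ N * |z i - w i| := by
    have := mul_lt_mul_of_pos_right hN he
    rwa [inv_mul_cancel₀ he.ne'] at this
  have h4 : (2 : ℝ) ^ N ≤ 2 ^ n := pow_le_pow_right₀ one_le_two hn
  nlinarith [abs_nonneg (z i - w i)]

lemma cfl_injOn {d : ℕ} {T : Set (EuclideanSpace ℝ (Fin d))} (hT : T.Finite) :
    ∃ n, Set.InjOn (cfl d n) T := by
  classical
  have sep : ∀ z w : EuclideanSpace ℝ (Fin d),
      ∃ N : ℕ, z ≠ w → ∀ n, N ≤ n → cfl d n z ≠ cfl d n w := by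
    intro z w
    by_cases h : z = w
    · exact ⟨0, fun hc => absurd h hc⟩
    · obtain ⟨N, hN⟩ := cfl_sep h
      exact ⟨N, fun _ => hN⟩
  choose F hF using sep
  set t := hT.toFinset with ht
  refine ⟨t.sup fun z => t.sup (F z), fun z hz w hw hzw => ?_⟩
  by_contra hne
  refine hF z w hne _ ?_ hzw
  calc F z w ≤ t.sup (F z) := Finset.le_sup (hT.mem_toFinset.mpr hw)
    _ ≤ t.sup fun z => t.sup (F z) :=
      Finset.le_sup (f := fun z => t.sup (F z)) (hT.mem_toFinset.mpr hz)

lemma encard_eq_iSup {d : ℕ} (S : Set (EuclideanSpace ℝ (Fin d))) :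
    (S.encard : ℝ≥0∞) = ⨆ n : ℕ, ((cfl d n '' S).encard : ℝ≥0∞) := by
  refine le_antisymm ?_ (iSup_le fun n => ENat.toENNReal_le.mpr (Set.encard_image_le _ _))
  rcases S.finite_or_infinite with hS | hS
  · obtain ⟨n, hn⟩ := cfl_injOn hS
    rw [← hn.encard_image]
    exact le_iSup (fun n => ((cfl d n '' S).encard : ℝ≥0∞)) n
  · by_contra hc
    push_neg at hc
    have htop : (⨆ n : ℕ, ((cfl d n '' S).encard : ℝ≥0∞)) ≠ ⊤ := by
      intro h
      rw [h, hS.encard_eq] at hc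
      simp at hc
    obtain ⟨m, hm⟩ := ENNReal.exists_nat_gt htop
    obtain ⟨T, hTS, hTfin, hTcard⟩ := hS.exists_subset_ncard_eq m
    obtain ⟨n, hinj⟩ := cfl_injOn hTfin
    have h1 : (m : ℝ≥0∞) = ((cfl d n '' T).encard : ℝ≥0∞) := by
      rw [hinj.encard_image, ← hTfin.cast_ncard_eq, hTcard]
      simp
    have h2 : ((cfl d n '' T).encard : ℝ≥0∞) ≤ ((cfl d n '' S).encard : ℝ≥0∞) :=
      ENat.toENNReal_le.mpr (Set.encard_mono (Set.image_mono hTS))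
    have h3 : (m : ℝ≥0∞) ≤ ⨆ n : ℕ, ((cfl d n '' S).encard : ℝ≥0∞) :=
      h1.le.trans (h2.trans (le_iSup (fun n => ((cfl d n '' S).encard : ℝ≥0∞)) n))
    exact absurd (hm.trans_le h3) (lt_irrefl _)

lemma mem_image_cfl {d n : ℕ} {S : Set (EuclideanSpace ℝ (Fin d))} {k : Fin d → ℤ} :
    k ∈ cfl d n '' S ↔ (S ∩ cfl d n ⁻¹' {k}).Nonempty := by
  constructor
  · rintro ⟨z, hz, rfl⟩
    exact ⟨z, hz, rfl⟩
  · rintro ⟨z, hzS, hzk⟩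
    exact ⟨z, hzS, hzk⟩

lemma count_eq {d : ℕ} (S : Set (EuclideanSpace ℝ (Fin d))) (n : ℕ) :
    ((cfl d n '' S).encard : ℝ≥0∞)
      = ∑' k : Fin d → ℤ, (cfl d n '' S).indicator (fun _ => (1 : ℝ≥0∞)) k := by
  rw [← ENNReal.tsum_set_one]
  exact tsum_subtype (cfl d n '' S) fun _ => (1 : ℝ≥0∞)

lemma isSigmaCompact_of_isOpen {X : Type*} [TopologicalSpace X] [T2Space X]
    [LocallyCompactSpace X] [SecondCountableTopology X] {U : Set X} (hU : IsOpen U) :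
    IsSigmaCompact U := by
  rw [isSigmaCompact_iff_sigmaCompactSpace]
  haveI := hU.locallyCompactSpace
  infer_instance

lemma ennreal_eq_zero_of_le_mul_inv_succ {c x : ℝ≥0∞} (hc : c ≠ ⊤)
    (h : ∀ m : ℕ, x ≤ c * ((m : ℝ≥0∞) + 1)⁻¹) : x = 0 := by
  by_contra hx
  set c' : ℝ≥0∞ := c + 1 with hc'
  have hc'0 : c' ≠ 0 := by simp [hc']
  have hc't : c' ≠ ⊤ := by simp [hc', hc]
  have hx' : x / c' ≠ 0 := by
    simp only [ne_eq, ENNReal.div_eq_zero_iff, not_or]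
    exact ⟨hx, hc't⟩
  obtain ⟨n, hn⟩ := ENNReal.exists_inv_nat_lt hx'
  have h1 : x ≤ c' * ((n : ℝ≥0∞) + 1)⁻¹ :=
    (h n).trans (mul_le_mul_left (le_add_right le_rfl) _)
  have h2 : ((n : ℝ≥0∞) + 1)⁻¹ ≤ (n : ℝ≥0∞)⁻¹ := ENNReal.inv_le_inv' le_self_add
  have h3 : c' * ((n : ℝ≥0∞))⁻¹ < c' * (x / c') :=
    (ENNReal.mul_lt_mul_iff_right hc'0 hc't).mpr hn
  rw [ENNReal.mul_div_cancel hc'0 hc't] at h3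
  exact absurd ((h1.trans (mul_le_mul_right h2 _)).trans_lt h3) (lt_irrefl _)

/-- The fiber of the dyadic-cube map is (closed set) ∩ (open set). -/
lemma fiber_eq {d n : ℕ} (k : Fin d → ℤ) :
    (cfl d n ⁻¹' {k} : Set (EuclideanSpace ℝ (Fin d)))
      = {z | ∀ i, (k i : ℝ) ≤ 2 ^ n * z i} ∩ {z | ∀ i, 2 ^ n * z i < (k i : ℝ) + 1} := by
  ext z
  simp only [Set.mem_preimage, Set.mem_singleton_iff, funext_iff, cfl, Set.mem_inter_iff,
    Set.mem_setOf_eq]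
  constructor
  · intro h
    constructor <;> intro i <;> [exact (Int.floor_eq_iff.mp (h i)).1;
      exact (Int.floor_eq_iff.mp (h i)).2]
  · rintro ⟨h1, h2⟩ i
    exact Int.floor_eq_iff.mpr ⟨h1 i, h2 i⟩

section

variable {d : ℕ}

local notation "E'" => EuclideanSpace ℝ (Fin d)

/-- The relevant product measure. -/
noncomputable def ρ (d : ℕ) : Measure (EuclideanSpace ℝ (Fin d) × ℝ) :=
  ((μH[(d : ℝ) - 1]).restrict (Metric.sphere 0 1)).prod (volume.restrict (Set.Ioi 0))

lemma rho_compl_sphere :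
    ρ d ((Metric.sphere (0 : E') 1)ᶜ ×ˢ (Set.univ : Set ℝ)) = 0 := by
  rw [ρ, Measure.prod_prod]
  have h : (μH[(d : ℝ) - 1]).restrict (Metric.sphere (0 : E') 1)
      ((Metric.sphere (0 : E') 1)ᶜ) = 0 := by
    rw [Measure.restrict_apply Metric.isClosed_sphere.measurableSet.compl]
    simp
  rw [h, zero_mul]

lemma aemeas_sigmaCompact (K : ℕ → Set E') (hK : ∀ m, IsCompact (K m)) :
    AEMeasurable
      (fun p : E' × ℝ =>
        (((⋃ m, K m) ∩ {z | ⟪p.1, z⟫_ℝ = p.2}).encard : ℝ≥0∞)) (ρ d) := by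
  classical
  set S : Set E' := ⋃ m, K m with hS
  -- open and closed parts of the fibers
  set C : ℕ → (Fin d → ℤ) → Set E' := fun n k => {z | ∀ i, (k i : ℝ) ≤ 2 ^ n * z i} with hC
  set O : ℕ → (Fin d → ℤ) → Set E' := fun n k => {z | ∀ i, 2 ^ n * z i < (k i : ℝ) + 1} with hO
  have hCcl : ∀ n k, IsClosed (C n k) := by
    intro n k
    rw [hC]
    simp only [Set.setOf_forall]
    have hcoord : ∀ i : Fin d, Continuous fun z : E' => z i := fun i => by fun_prop
    exact isClosed_iInter fun i =>
      isClosed_le continuous_const (continuous_const.mul (hcoord i))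
  have hOop : ∀ n k, IsOpen (O n k) := by
    intro n k
    rw [hO]
    simp only [Set.setOf_forall]
    have hcoord : ∀ i : Fin d, Continuous fun z : E' => z i := fun i => by fun_prop
    exact isOpen_iInter_of_finite fun i =>
      isOpen_lt (continuous_const.mul (hcoord i)) continuous_const
  have hOsc : ∀ n k, IsSigmaCompact (O n k) := fun n k => isSigmaCompact_of_isOpen (hOop n k)
  choose Q hQc hQU using hOsc
  -- the compact image sets
  have hmap : Continuous (fun q : E' × E' => (q.1, ⟪q.1, q.2⟫_ℝ)) :=
    continuous_fst.prodMk continuous_inner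
  set Eset : ℕ → (Fin d → ℤ) → Set (E' × ℝ) := fun n k =>
    {p | ((S ∩ {z | ⟪p.1, z⟫_ℝ = p.2}) ∩ cfl d n ⁻¹' {k}).Nonempty} with hEset
  set Eset' : ℕ → (Fin d → ℤ) → Set (E' × ℝ) := fun n k =>
    ⋃ m, ⋃ j, (fun q : E' × E' => (q.1, ⟪q.1, q.2⟫_ℝ)) ''
      ((Metric.sphere 0 1) ×ˢ ((K m ∩ C n k) ∩ Q n k j)) with hEset'
  have hEset'meas : ∀ n k, MeasurableSet (Eset' n k) := by
    intro n k
    refine MeasurableSet.iUnion fun m => MeasurableSet.iUnion fun j => ?_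
    exact (((isCompact_sphere 0 1).prod (((hK m).inter_right (hCcl n k)).inter
      (hQc n k j))).image hmap).measurableSet
  have hEq : ∀ n k, Eset n k ∩ ((Metric.sphere (0 : E') 1) ×ˢ (Set.univ : Set ℝ))
      = Eset' n k := by
    intro n k
    ext p
    constructor
    · rintro ⟨hp, hps, -⟩
      obtain ⟨z, ⟨⟨hzS, hzD⟩, hzk⟩⟩ := hp
      obtain ⟨m, hm⟩ := Set.mem_iUnion.mp hzS
      have hzf : z ∈ C n k ∩ O n k := by
        rw [← fiber_eq]; exact hzk
      obtain ⟨j, hj⟩ := Set.mem_iUnion.mp ((hQU n k).symm ▸ hzf.2)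
      refine Set.mem_iUnion.mpr ⟨m, Set.mem_iUnion.mpr ⟨j, ⟨(p.1, z), ⟨hps, ⟨⟨hm, hzf.1⟩, hj⟩⟩, ?_⟩⟩⟩
      simp only [Set.mem_setOf_eq] at hzD
      exact Prod.ext rfl hzD
    · intro hp
      obtain ⟨m, hp⟩ := Set.mem_iUnion.mp hp
      obtain ⟨j, hp⟩ := Set.mem_iUnion.mp hp
      obtain ⟨⟨θ, z⟩, ⟨hθ, ⟨⟨hzK, hzC⟩, hzQ⟩⟩, rfl⟩ := hp
      have hzO : z ∈ O n k := by
        rw [← hQU n k]; exact Set.mem_iUnion.mpr ⟨j, hzQ⟩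
      refine ⟨⟨z, ⟨⟨Set.mem_iUnion.mpr ⟨m, hzK⟩, rfl⟩, ?_⟩⟩, hθ, trivial⟩
      rw [fiber_eq]
      exact ⟨hzC, hzO⟩
  -- the measurable comparison function
  set G : E' × ℝ → ℝ≥0∞ := fun p =>
    ⨆ n : ℕ, ∑' k : Fin d → ℤ, (Eset' n k).indicator (fun _ => (1 : ℝ≥0∞)) p with hG
  have hGmeas : Measurable G := by
    refine Measurable.iSup fun n => Measurable.ennreal_tsum fun k => ?_
    exact measurable_const.indicator (hEset'meas n k)
  -- the target function equals the iSup-tsum of indicators of `Eset`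
  have hFeq : ∀ p : E' × ℝ,
      ((S ∩ {z | ⟪p.1, z⟫_ℝ = p.2}).encard : ℝ≥0∞)
        = ⨆ n : ℕ, ∑' k : Fin d → ℤ, (Eset n k).indicator (fun _ => (1 : ℝ≥0∞)) p := by
    intro p
    rw [encard_eq_iSup]
    refine iSup_congr fun n => ?_
    rw [count_eq]
    refine tsum_congr fun k => ?_
    rw [Set.indicator_apply, Set.indicator_apply]
    refine if_congr ?_ rfl rfl
    rw [mem_image_cfl]
    rfl
  refine ⟨G, hGmeas, ?_⟩
  have hsub : {p : E' × ℝ |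
      ¬ (((S ∩ {z | ⟪p.1, z⟫_ℝ = p.2}).encard : ℝ≥0∞) = G p)}
        ⊆ (Metric.sphere (0 : E') 1)ᶜ ×ˢ (Set.univ : Set ℝ) := by
    intro p hp
    simp only [Set.mem_setOf_eq] at hp
    by_contra hpZ
    have hpin : p ∈ (Metric.sphere (0 : E') 1) ×ˢ (Set.univ : Set ℝ) := by
      simp only [Set.mem_prod, Set.mem_compl_iff, Set.mem_univ, and_true] at hpZ ⊢
      exact not_not.mp hpZ
    refine hp ?_
    rw [hFeq p, hG]
    refine iSup_congr fun n => tsum_congr fun k => ?_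
    have : p ∈ Eset n k ↔ p ∈ Eset' n k := by
      rw [← hEq n k]
      exact ⟨fun h => ⟨h, hpin⟩, fun h => h.1⟩
    rw [Set.indicator_apply, Set.indicator_apply, if_congr this rfl rfl]
  show ∀ᵐ p ∂(ρ d), ((S ∩ {z | ⟪p.1, z⟫_ℝ = p.2}).encard : ℝ≥0∞) = G p
  exact ae_iff.mpr (measure_mono_null hsub rho_compl_sphere)

lemma bad_null (g : ℝ → E') (Kc : ℝ≥0) (hg : LipschitzWith Kc g)
    (B : Set E') (T'' : Set ℝ) (hvol : volume T'' = 0) (hBT : B ⊆ g '' T'') :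
    ρ d {p : E' × ℝ | (B ∩ {z | ⟪p.1, z⟫_ℝ = p.2}).Nonempty} = 0 := by
  classical
  have hV : ∀ m : ℕ, ∃ V, T'' ⊆ V ∧ IsOpen V ∧ volume V < ((m : ℝ≥0∞) + 1)⁻¹ := by
    intro m
    obtain ⟨U, hU1, hU2, hU3⟩ := Set.exists_isOpen_lt_of_lt T'' (((m : ℝ≥0∞) + 1)⁻¹)
      (by rw [hvol]
          exact ENNReal.inv_pos.mpr (by simp))
    exact ⟨U, hU1, hU2, hU3⟩
  choose V hTV hVop hVvol using hV
  choose Q hQc hQU using fun m => isSigmaCompact_of_isOpen (hVop m)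
  have hmap : Continuous (fun q : E' × ℝ => (q.1, ⟪q.1, g q.2⟫_ℝ)) := by
    refine continuous_fst.prodMk ?_
    exact continuous_inner.comp (continuous_fst.prodMk (hg.continuous.comp continuous_snd))
  set M : ℕ → Set (E' × ℝ) := fun m =>
    ⋃ j, (fun q : E' × ℝ => (q.1, ⟪q.1, g q.2⟫_ℝ)) '' ((Metric.sphere 0 1) ×ˢ Q m j) with hM
  have hMmeas : ∀ m, MeasurableSet (M m) := by
    intro m
    exact MeasurableSet.iUnion fun j =>
      (((isCompact_sphere 0 1).prod (hQc m j)).image hmap).measurableSet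
  set M₀ : Set (E' × ℝ) := ⋂ m, M m with hM₀
  have hM₀meas : MeasurableSet M₀ := MeasurableSet.iInter fun m => hMmeas m
  have hBadsub : {p : E' × ℝ | (B ∩ {z | ⟪p.1, z⟫_ℝ = p.2}).Nonempty}
      ⊆ M₀ ∪ (Metric.sphere (0 : E') 1)ᶜ ×ˢ (Set.univ : Set ℝ) := by
    intro p hp
    obtain ⟨z, hzB, hzD⟩ := hp
    by_cases hps : p.1 ∈ Metric.sphere (0 : E') 1
    · left
      obtain ⟨t, htT, rfl⟩ := hBT hzB
      refine Set.mem_iInter.mpr fun m => ?_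
      have htV : t ∈ V m := hTV m htT
      obtain ⟨j, hj⟩ := Set.mem_iUnion.mp ((hQU m).symm ▸ htV)
      refine Set.mem_iUnion.mpr ⟨j, ⟨(p.1, t), ⟨hps, hj⟩, ?_⟩⟩
      simp only [Set.mem_setOf_eq] at hzD
      exact Prod.ext rfl hzD
    · right
      exact ⟨hps, trivial⟩
  refine measure_mono_null hBadsub (le_antisymm (le_trans (measure_union_le _ _) ?_) zero_le)
  rw [rho_compl_sphere, add_zero]
  -- main Fubini argument
  rw [ρ, Measure.prod_apply hM₀meas]
  have hzero : ∀ θ ∈ Metric.sphere (0 : E') 1,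
      (volume.restrict (Set.Ioi (0:ℝ))) (Prod.mk θ ⁻¹' M₀) = 0 := by
    intro θ hθ
    have hlip1 : LipschitzWith 1 (fun z : E' => ⟪θ, z⟫_ℝ) := by
      refine (innerSL ℝ θ).lipschitz.weaken ?_
      rw [← NNReal.coe_le_coe, coe_nnnorm, NNReal.coe_one, innerSL_apply_norm]
      exact le_of_eq (mem_sphere_zero_iff_norm.mp hθ)
    have hlip : LipschitzWith (1 * Kc) (fun t : ℝ => ⟪θ, g t⟫_ℝ) := hlip1.comp hg
    have hsec : ∀ m : ℕ, Prod.mk θ ⁻¹' M₀ ⊆ (fun t : ℝ => ⟪θ, g t⟫_ℝ) '' V m := by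
      intro m r hr
      have hrm : (θ, r) ∈ M m := Set.mem_iInter.mp hr m
      obtain ⟨j, hj⟩ := Set.mem_iUnion.mp hrm
      obtain ⟨⟨θ', t⟩, ⟨hθ', htQ⟩, heq⟩ := hj
      have h1 : θ' = θ := congrArg Prod.fst heq
      have h2 : r = ⟪θ', g t⟫_ℝ := (congrArg Prod.snd heq).symm
      refine ⟨t, ?_, ?_⟩
      · rw [← hQU m]; exact Set.mem_iUnion.mpr ⟨j, htQ⟩
      · rw [h2, h1]
    have himg : ∀ m : ℕ, volume ((fun t : ℝ => ⟪θ, g t⟫_ℝ) '' V m)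
        ≤ ((1 * Kc : ℝ≥0) : ℝ≥0∞) * volume (V m) := by
      intro m
      have h := hlip.hausdorffMeasure_image_le (le_of_lt one_pos) (V m)
      rw [MeasureTheory.hausdorffMeasure_real, ENNReal.rpow_one] at h
      exact h
    have hvol0 : volume (Prod.mk θ ⁻¹' M₀) = 0 := by
      refine ennreal_eq_zero_of_le_mul_inv_succ (c := ((1 * Kc : ℝ≥0) : ℝ≥0∞))
        ENNReal.coe_ne_top (fun m => ?_)
      calc volume (Prod.mk θ ⁻¹' M₀)
          ≤ volume ((fun t : ℝ => ⟪θ, g t⟫_ℝ) '' V m) := measure_mono (hsec m)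
        _ ≤ ((1 * Kc : ℝ≥0) : ℝ≥0∞) * volume (V m) := himg m
        _ ≤ ((1 * Kc : ℝ≥0) : ℝ≥0∞) * ((m : ℝ≥0∞) + 1)⁻¹ :=
            mul_le_mul_right (hVvol m).le _
    exact le_antisymm
      (le_trans (Measure.le_iff'.mp Measure.restrict_le_self _) hvol0.le) zero_le
  have hae : (fun θ => (volume.restrict (Set.Ioi (0:ℝ))) (Prod.mk θ ⁻¹' M₀))
      =ᵐ[(μH[(d : ℝ) - 1]).restrict (Metric.sphere 0 1)] 0 :=
    ae_restrict_of_forall_mem Metric.isClosed_sphere.measurableSet hzero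
  rw [lintegral_congr_ae hae]
  simp

end

end Statement8Aux

theorem statement_8 {d : ℕ}
    (f : ℝ → EuclideanSpace ℝ (Fin d)) (hf : ContinuousOn f (Set.Icc 0 1))
    (hrect : eVariationOn f (Set.Icc 0 1) ≠ ⊤)
    (A : Set (EuclideanSpace ℝ (Fin d))) (hA : A ⊆ f '' Set.Icc 0 1)
    (hAm : MeasurableSet A) :
    NullMeasurable
      (fun p : EuclideanSpace ℝ (Fin d) × ℝ =>
        ((A ∩ {z | ⟪p.1, z⟫_ℝ = p.2}).encard : ℝ≥0∞))
      (((μH[(d : ℝ) - 1]).restrict (Metric.sphere 0 1)).prod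
        (volume.restrict (Set.Ioi 0))) := by
  classical
  have hlbv : LocallyBoundedVariationOn f (Set.Icc 0 1) := fun x y _ _ =>
    ne_top_of_le_ne_top hrect (eVariationOn.mono f Set.inter_subset_left)
  set φ := variationOnFromTo f (Set.Icc 0 1) 0 with hφ
  set γ := naturalParameterization f (Set.Icc 0 1) 0 with hγ
  set T := φ '' Set.Icc 0 1 with hT
  set L := (eVariationOn f (Set.Icc 0 1)).toReal with hL
  have h0mem : (0 : ℝ) ∈ Set.Icc (0 : ℝ) 1 := Set.left_mem_Icc.mpr zero_le_one
  have hfeq : ∀ x ∈ Set.Icc (0 : ℝ) 1, f x = γ (φ x) := fun x hx =>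
    (edist_eq_zero.mp (edist_naturalParameterization_eq_zero hlbv h0mem hx)).symm
  have hTL : T ⊆ Set.Icc 0 L := by
    rintro _ ⟨x, hx, rfl⟩
    constructor
    · exact variationOnFromTo.nonneg_of_le f _ hx.1
    · rw [hφ, variationOnFromTo.eq_of_le f _ hx.1]
      exact ENNReal.toReal_mono hrect (eVariationOn.mono f Set.inter_subset_left)
  have hus : HasUnitSpeedOn γ T := has_unit_speed_naturalParameterization f hlbv h0mem
  have hlip : LipschitzOnWith 1 γ T := by
    have key : ∀ a ∈ T, ∀ b ∈ T, a ≤ b → edist (γ a) (γ b) ≤ 1 * edist a b := by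
      intro a ha b hb hab
      calc edist (γ a) (γ b) ≤ eVariationOn γ (T ∩ Set.Icc a b) :=
            eVariationOn.edist_le γ ⟨ha, le_rfl, hab⟩ ⟨hb, hab, le_rfl⟩
        _ = ENNReal.ofReal ((1 : ℝ≥0) * (b - a)) := hus ha hb
        _ ≤ 1 * edist a b := by
            rw [one_mul, NNReal.coe_one, one_mul, edist_dist, Real.dist_eq]
            exact ENNReal.ofReal_le_ofReal (abs_sub_comm a b ▸ le_abs_self (b - a))
    intro x hx y hy
    rcases le_total x y with h | h
    · exact key x hx y hy h
    · rw [edist_comm (γ x) (γ y), edist_comm x y]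
      exact key y hy x hx h
  obtain ⟨g, hg, hgeq⟩ := hlip.extend_finite_dimension
  have hgm : Measurable g := hg.continuous.measurable
  have hΓ : f '' Set.Icc 0 1 = g '' T := by
    have h1 : f '' Set.Icc 0 1 = (fun x => γ (φ x)) '' Set.Icc 0 1 := Set.image_congr hfeq
    have h2 : (fun x => γ (φ x)) '' Set.Icc 0 1 = γ '' T := by
      rw [hT, ← Set.image_comp]
      rfl
    rw [h1, h2, Set.EqOn.image_eq hgeq]
  set lam := Measure.map g (volume.restrict (Set.Icc 0 L)) with hlam
  haveI : IsFiniteMeasure lam := by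
    constructor
    rw [hlam, Measure.map_apply hgm MeasurableSet.univ]
    simp only [Set.preimage_univ]
    rw [Measure.restrict_apply MeasurableSet.univ, Set.univ_inter]
    exact measure_Icc_lt_top
  have hKm : ∀ m : ℕ, ∃ Kf : Set (EuclideanSpace ℝ (Fin d)),
      Kf ⊆ A ∧ IsCompact Kf ∧ lam (A \ Kf) < ((m : ℝ≥0∞) + 1)⁻¹ := fun m =>
    hAm.exists_isCompact_diff_lt (measure_ne_top lam A) (by simp)
  choose Kf hKA hKc hKlt using hKm
  set F := ⋃ m, Kf m with hF
  have hFm : MeasurableSet F := MeasurableSet.iUnion fun m => (hKc m).measurableSet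
  have hBm : MeasurableSet (A \ F) := hAm.diff hFm
  have hBnull : lam (A \ F) = 0 := by
    refine Statement8Aux.ennreal_eq_zero_of_le_mul_inv_succ (c := 1) ENNReal.one_ne_top
      fun m => ?_
    rw [one_mul]
    exact le_trans
      (measure_mono (Set.diff_subset_diff_right (Set.subset_iUnion Kf m))) (hKlt m).le
  set T'' := g ⁻¹' (A \ F) ∩ Set.Icc 0 L with hT''
  have hvolT : volume T'' = 0 := by
    rw [hlam, Measure.map_apply hgm hBm, Measure.restrict_apply (hgm hBm)] at hBnull
    exact hBnull
  have hBT : A \ F ⊆ g '' T'' := by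
    intro b hb
    obtain ⟨t, htT, rfl⟩ : b ∈ g '' T := by
      rw [← hΓ]
      exact hA hb.1
    exact ⟨t, ⟨hb, hTL htT⟩, rfl⟩
  have hbad := Statement8Aux.bad_null g _ hg (A \ F) T'' hvolT hBT
  have hmain := Statement8Aux.aemeas_sigmaCompact Kf hKc
  have hae : (fun p : EuclideanSpace ℝ (Fin d) × ℝ =>
      (((⋃ m, Kf m) ∩ {z | ⟪p.1, z⟫_ℝ = p.2}).encard : ℝ≥0∞))
      =ᵐ[Statement8Aux.ρ d]
      (fun p => ((A ∩ {z | ⟪p.1, z⟫_ℝ = p.2}).encard : ℝ≥0∞)) := by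
    refine ae_iff.mpr (measure_mono_null ?_ hbad)
    intro p hp
    simp only [Set.mem_setOf_eq] at hp ⊢
    by_contra hpe
    refine hp ?_
    have hFA : (⋃ m, Kf m) ∩ {z | ⟪p.1, z⟫_ℝ = p.2} = A ∩ {z | ⟪p.1, z⟫_ℝ = p.2} := by
      apply Set.Subset.antisymm
      · exact Set.inter_subset_inter_left _ (Set.iUnion_subset hKA)
      · rintro z ⟨hzA, hzD⟩
        by_cases hzF : z ∈ F
        · exact ⟨hzF, hzD⟩
        · exact absurd ⟨z, ⟨hzA, hzF⟩, hzD⟩ hpe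
    rw [hFA]
  exact (hmain.congr hae).nullMeasurable
end

section
/- Let g:[0,1]→ℝ^d be a rectifiable curve with ℋ¹(Im g) = 𝓛(g). Then Card(g^{−1}({y})) = 1 for ℋ¹-almost every y ∈ Im g; that is, the set {y ∈ Im g : Card(g^{−1}({y})) > 1} is negligible for the trace of ℋ¹ on Im g. -/
open MeasureTheory Filter
open scoped ENNReal NNReal InnerProductSpace Topology

/-- The `ℋ¹` measure of the image of a subinterval of a rectifiable curve is at most
its variation on that subinterval. -/
lemma aux_image_le {d : ℕ} (g : ℝ → EuclideanSpace ℝ (Fin d))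
    (hrect : eVariationOn g (Set.Icc 0 1) ≠ ⊤) {a b : ℝ}
    (ha : (0:ℝ) ≤ a) (hab : a ≤ b) (hb : b ≤ 1) :
    μH[1] (g '' Set.Icc a b) ≤ eVariationOn g (Set.Icc a b) := by
  set S : Set ℝ := Set.Icc 0 1 with hSdef
  have hbv : BoundedVariationOn g S := hrect
  have hloc : LocallyBoundedVariationOn g S := hbv.locallyBoundedVariationOn
  have h0 : (0:ℝ) ∈ S := ⟨le_rfl, zero_le_one⟩
  have haS : a ∈ S := ⟨ha, hab.trans hb⟩
  have hbS : b ∈ S := ⟨ha.trans hab, hb⟩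
  set v : ℝ → ℝ := variationOnFromTo g S 0 with hv
  have hmono : MonotoneOn v S := variationOnFromTo.monotoneOn hloc h0
  have hsub : ∀ t1 ∈ S, ∀ t2 ∈ S, t1 ≤ t2 →
      v t2 - v t1 = variationOnFromTo g S t1 t2 := by
    intro t1 h1 t2 h2 _
    rw [hv]
    linarith [variationOnFromTo.add hloc h0 h1 h2]
  have hedist : ∀ t1 ∈ S, ∀ t2 ∈ S, t1 ≤ t2 →
      edist (g t1) (g t2) ≤ ENNReal.ofReal (v t2 - v t1) := by
    intro t1 h1 t2 h2 h12
    rw [hsub t1 h1 t2 h2 h12, variationOnFromTo.eq_of_le g S h12,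
      ENNReal.ofReal_toReal (hloc t1 t2 h1 h2)]
    exact eVariationOn.edist_le g ⟨h1, le_rfl, h12⟩ ⟨h2, h12, le_rfl⟩
  have hedist' : ∀ t1 ∈ S, ∀ t2 ∈ S, edist (g t1) (g t2) ≤ edist (v t1) (v t2) := by
    intro t1 h1 t2 h2
    rcases le_total t1 t2 with h | h
    · rw [edist_dist (v t1) (v t2), Real.dist_eq, abs_sub_comm, abs_of_nonneg (sub_nonneg.2 (hmono h1 h2 h))]
      exact hedist t1 h1 t2 h2 h
    · rw [edist_comm (g t1), edist_dist (v t1) (v t2), Real.dist_eq, abs_of_nonneg (sub_nonneg.2 (hmono h2 h1 h))]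
      exact hedist t2 h2 t1 h1 h
  set f : ℝ → EuclideanSpace ℝ (Fin d) := g ∘ Function.invFunOn v S with hf
  have hfv : ∀ t ∈ S, f (v t) = g t := by
    intro t ht
    have hex : ∃ t' ∈ S, v t' = v t := ⟨t, ht, rfl⟩
    have h1 : Function.invFunOn v S (v t) ∈ S := Function.invFunOn_mem hex
    have h2 : v (Function.invFunOn v S (v t)) = v t := Function.invFunOn_eq hex
    have h3 := hedist' _ h1 t ht
    rw [h2, edist_self] at h3
    have : edist (f (v t)) (g t) = 0 := le_antisymm h3 zero_le
    exact edist_eq_zero.1 this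
  have hlip : LipschitzOnWith 1 f (v '' S) := by
    rintro x ⟨t1, h1, rfl⟩ y ⟨t2, h2, rfl⟩
    rw [hfv t1 h1, hfv t2 h2, ENNReal.coe_one, one_mul]
    exact hedist' t1 h1 t2 h2
  have hIcc : Set.Icc a b ⊆ S := Set.Icc_subset_Icc ha hb
  have himg : g '' Set.Icc a b = f '' (v '' Set.Icc a b) := by
    rw [← Set.image_comp]
    exact Set.image_congr fun t ht => (hfv t (hIcc ht)).symm
  have himg2 : v '' Set.Icc a b ⊆ Set.Icc (v a) (v b) := by
    rintro x ⟨t, ht, rfl⟩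
    exact ⟨hmono haS (hIcc ht) ht.1, hmono (hIcc ht) hbS ht.2⟩
  calc μH[1] (g '' Set.Icc a b) = μH[1] (f '' (v '' Set.Icc a b)) := by rw [himg]
    _ ≤ ((1:ℝ≥0) : ℝ≥0∞) ^ (1:ℝ) * μH[1] (v '' Set.Icc a b) :=
        (hlip.mono (Set.image_mono (f := v) hIcc)).hausdorffMeasure_image_le zero_le_one
    _ = μH[1] (v '' Set.Icc a b) := by simp
    _ ≤ μH[1] (Set.Icc (v a) (v b)) := measure_mono himg2
    _ = ENNReal.ofReal (v b - v a) := by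
        rw [MeasureTheory.hausdorffMeasure_real, Real.volume_Icc]
    _ = eVariationOn g (Set.Icc a b) := by
        rw [hsub a haS b hbS hab, variationOnFromTo.eq_of_le g S hab,
          ENNReal.ofReal_toReal (hloc a b haS hbS),
          Set.inter_eq_self_of_subset_right hIcc]

/-- For a rectifiable curve `g : [0,1] → ℝ^d` with
`ℋ¹(Im g) = 𝓛(g)`, the set of points `y ∈ Im g` with more than one preimage
`{t ∈ [0,1] | g t = y}` is `ℋ¹`-negligible. -/
theorem statement_11 {d : ℕ}
    (g : ℝ → EuclideanSpace ℝ (Fin d)) (hg : ContinuousOn g (Set.Icc 0 1))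
    (hrect : eVariationOn g (Set.Icc 0 1) ≠ ⊤)
    (hlen : μH[1] (g '' Set.Icc 0 1) = eVariationOn g (Set.Icc 0 1)) :
    μH[1] {y ∈ g '' Set.Icc 0 1 | 1 < {t ∈ Set.Icc (0:ℝ) 1 | g t = y}.encard} = 0 := by
  have key : ∀ q : ℚ, μH[1] ((g '' Set.Icc 0 (q:ℝ)) ∩ (g '' Set.Icc (q:ℝ) 1)) = 0 := by
    intro q
    by_cases h0q : (0:ℝ) ≤ (q:ℝ)
    · by_cases hq1 : (q:ℝ) ≤ 1
      · set A := g '' Set.Icc (0:ℝ) (q:ℝ) with hA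
        set B := g '' Set.Icc (q:ℝ) 1 with hB
        have hBmeas : MeasurableSet B :=
          (isCompact_Icc.image_of_continuousOn
            (hg.mono (Set.Icc_subset_Icc h0q le_rfl))).measurableSet
        have hunion : A ∪ B = g '' Set.Icc 0 1 := by
          rw [hA, hB, ← Set.image_union, Set.Icc_union_Icc_eq_Icc h0q hq1]
        have hie := measure_union_add_inter (μ := μH[1]) A hBmeas
        have hAle : μH[1] A ≤ eVariationOn g (Set.Icc (0:ℝ) (q:ℝ)) :=
          aux_image_le g hrect le_rfl h0q hq1
        have hBle : μH[1] B ≤ eVariationOn g (Set.Icc (q:ℝ) 1) :=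
          aux_image_le g hrect h0q hq1 le_rfl
        have hsum : eVariationOn g (Set.Icc (0:ℝ) (q:ℝ)) + eVariationOn g (Set.Icc (q:ℝ) 1)
            = eVariationOn g (Set.Icc (0:ℝ) 1) := by
          have h := eVariationOn.Icc_add_Icc g (s := Set.Icc (0:ℝ) 1) h0q hq1 ⟨h0q, hq1⟩
          rwa [Set.inter_eq_self_of_subset_right (Set.Icc_subset_Icc le_rfl hq1),
            Set.inter_eq_self_of_subset_right (Set.Icc_subset_Icc h0q le_rfl),
            Set.inter_self] at h
        have hfin : μH[1] (A ∪ B) ≠ ⊤ := by rw [hunion, hlen]; exact hrect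
        have hle : μH[1] (A ∪ B) + μH[1] (A ∩ B) ≤ μH[1] (A ∪ B) + 0 := by
          rw [hie, add_zero, hunion, hlen, ← hsum]
          exact add_le_add hAle hBle
        have := ENNReal.le_of_add_le_add_left hfin hle
        exact le_antisymm this zero_le
      · have : Set.Icc (q:ℝ) 1 = ∅ := Set.Icc_eq_empty (fun h => hq1 h)
        simp [this]
    · have : Set.Icc (0:ℝ) (q:ℝ) = ∅ := Set.Icc_eq_empty (fun h => h0q h)
      simp [this]
  have hcover : {y ∈ g '' Set.Icc 0 1 | 1 < {t ∈ Set.Icc (0:ℝ) 1 | g t = y}.encard}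
      ⊆ ⋃ q : ℚ, (g '' Set.Icc 0 (q:ℝ)) ∩ (g '' Set.Icc (q:ℝ) 1) := by
    rintro y ⟨_, hcard⟩
    obtain ⟨t1, t2, h1, h2, hne⟩ := Set.one_lt_encard_iff.1 hcard
    rcases Ne.lt_or_gt hne with hlt | hlt
    · obtain ⟨q, hq1, hq2⟩ := exists_rat_btwn hlt
      exact Set.mem_iUnion.2 ⟨q, ⟨t1, ⟨h1.1.1, hq1.le⟩, h1.2⟩, ⟨t2, ⟨hq2.le, h2.1.2⟩, h2.2⟩⟩
    · obtain ⟨q, hq1, hq2⟩ := exists_rat_btwn hlt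
      exact Set.mem_iUnion.2 ⟨q, ⟨t2, ⟨h2.1.1, hq1.le⟩, h2.2⟩, ⟨t1, ⟨hq2.le, h1.1.2⟩, h1.2⟩⟩
  exact measure_mono_null hcover (measure_iUnion_null key)
end

section
/- Let g:[0,1]→ℝ^d be a rectifiable curve with 0 < 𝓛(g) < ∞ and ℋ¹(Im g) = 𝓛(g). Then for every subdivision a_0 = 0 < a_1 < … < a_n = 1 and every 1 ≤ i ≤ n, one has 𝓛(g|_{(a_{i−1}, a_i)}) = ℋ¹(g((a_{i−1}, a_i))). -/
open MeasureTheory Filter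
open scoped ENNReal NNReal InnerProductSpace Topology

/-- The 1-dimensional Hausdorff measure of the image of a set under a map is at most
the variation of the map on that set. -/
lemma hausdorffMeasure_image_le_eVariationOn {d : ℕ} (g : ℝ → EuclideanSpace ℝ (Fin d))
    (s : Set ℝ) : μH[1] (g '' s) ≤ eVariationOn g s := by
  rcases eq_or_ne (eVariationOn g s) ⊤ with h | h
  · simp [h]
  rcases s.eq_empty_or_nonempty with rfl | ⟨c, cs⟩
  · simp
  have hloc : LocallyBoundedVariationOn g s := fun x y _ _ =>
    ne_top_of_le_ne_top h (eVariationOn.mono g Set.inter_subset_left)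
  set φ : ℝ → ℝ := variationOnFromTo g s c with hφ
  set Vt : ℝ := (eVariationOn g s).toReal with hVt
  -- key distance estimate
  have key : ∀ x ∈ s, ∀ y ∈ s, edist (g x) (g y) ≤ edist (φ x) (φ y) := by
    have main : ∀ x ∈ s, ∀ y ∈ s, x ≤ y → edist (g x) (g y) ≤ edist (φ x) (φ y) := by
      intro x hx y hy hxy
      have hadd := variationOnFromTo.add hloc cs hx hy
      change φ x + _ = φ y at hadd
      have heq : φ y - φ x = (eVariationOn g (s ∩ Set.Icc x y)).toReal := by
        rw [← variationOnFromTo.eq_of_le g s hxy]; linarith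
      have hle : edist (g x) (g y) ≤ eVariationOn g (s ∩ Set.Icc x y) :=
        eVariationOn.edist_le g ⟨hx, le_rfl, hxy⟩ ⟨hy, hxy, le_rfl⟩
      have hfin : eVariationOn g (s ∩ Set.Icc x y) ≠ ⊤ :=
        ne_top_of_le_ne_top h (eVariationOn.mono g Set.inter_subset_left)
      have : edist (φ x) (φ y) = eVariationOn g (s ∩ Set.Icc x y) := by
        rw [edist_dist, Real.dist_eq, abs_sub_comm, abs_of_nonneg (by rw [heq]; positivity),
          heq, ENNReal.ofReal_toReal hfin]
      rw [this]; exact hle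
    intro x hx y hy
    rcases le_total x y with hxy | hyx
    · exact main x hx y hy hxy
    · rw [edist_comm, edist_comm (φ x)]; exact main y hy x hx hyx
  set f : ℝ → EuclideanSpace ℝ (Fin d) := g ∘ Function.invFunOn φ s with hf
  have hinvmem : ∀ x ∈ s, Function.invFunOn φ s (φ x) ∈ s := fun x hx =>
    Function.invFunOn_mem ⟨x, hx, rfl⟩
  have hinveq : ∀ x ∈ s, φ (Function.invFunOn φ s (φ x)) = φ x := fun x hx =>
    Function.invFunOn_eq ⟨x, hx, rfl⟩
  have hfφ : ∀ x ∈ s, f (φ x) = g x := by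
    intro x hx
    have h1 := hinvmem x hx
    have h2 := hinveq x hx
    have := key _ h1 _ hx
    rw [h2, edist_self, le_zero_iff, edist_eq_zero] at this
    simpa [hf] using this
  have hlip : LipschitzOnWith 1 f (φ '' s) := by
    rintro _ ⟨x, hx, rfl⟩ _ ⟨y, hy, rfl⟩
    calc edist (f (φ x)) (f (φ y)) = edist (g (Function.invFunOn φ s (φ x)))
          (g (Function.invFunOn φ s (φ y))) := rfl
      _ ≤ edist (φ (Function.invFunOn φ s (φ x))) (φ (Function.invFunOn φ s (φ y))) :=
          key _ (hinvmem x hx) _ (hinvmem y hy)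
      _ = edist (φ x) (φ y) := by rw [hinveq x hx, hinveq y hy]
      _ ≤ 1 * edist (φ x) (φ y) := by simp
  have himg : g '' s = f '' (φ '' s) := by
    rw [Set.image_image]
    exact (Set.image_congr fun x hx => (hfφ x hx).symm)
  -- bound the image of φ
  have hdiff : ∀ x ∈ s, ∀ y ∈ s, φ x - φ y ≤ Vt := by
    intro x hx y hy
    rcases le_total x y with hxy | hyx
    · have : φ x ≤ φ y := variationOnFromTo.monotoneOn hloc cs hx hy hxy
      linarith [this,
        ENNReal.toReal_nonneg (a := eVariationOn g s)]
    · have hadd := variationOnFromTo.add hloc cs hy hx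
      change φ y + _ = φ x at hadd
      have heq : φ x - φ y = (eVariationOn g (s ∩ Set.Icc y x)).toReal := by
        rw [← variationOnFromTo.eq_of_le g s hyx]; linarith
      rw [heq, hVt]
      exact ENNReal.toReal_mono h (eVariationOn.mono g Set.inter_subset_left)
  have hbddb : BddBelow (φ '' s) := by
    refine ⟨φ c - Vt, ?_⟩
    rintro _ ⟨x, hx, rfl⟩
    have := hdiff c cs x hx; linarith
  set m : ℝ := sInf (φ '' s) with hm
  have hsub : φ '' s ⊆ Set.Icc m (m + Vt) := by
    rintro _ ⟨x, hx, rfl⟩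
    constructor
    · exact csInf_le hbddb ⟨x, hx, rfl⟩
    · have : φ x - Vt ≤ m := by
        rw [hm]
        refine le_csInf ⟨φ c, Set.mem_image_of_mem φ cs⟩ ?_
        rintro _ ⟨y, hy, rfl⟩
        have := hdiff x hx y hy; linarith
      linarith
  calc μH[1] (g '' s) = μH[1] (f '' (φ '' s)) := by rw [himg]
    _ ≤ (1 : ℝ≥0) ^ (1:ℝ) * μH[1] (φ '' s) := hlip.hausdorffMeasure_image_le zero_le_one
    _ = μH[1] (φ '' s) := by norm_num
    _ ≤ μH[1] (Set.Icc m (m + Vt)) := measure_mono hsub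
    _ = ENNReal.ofReal Vt := by
        rw [MeasureTheory.hausdorffMeasure_real, Real.volume_Icc, add_sub_cancel_left]
    _ = eVariationOn g s := ENNReal.ofReal_toReal h


/-- For a rectifiable curve `g : [0,1] → ℝ^d` with
`0 < 𝓛(g) < ∞` and `ℋ¹(Im g) = 𝓛(g)`, for any subdivision
`a 0 = 0 < a 1 < … < a n = 1` and any `1 ≤ i ≤ n`, the length of the restriction
of `g` to `(a (i-1), a i)` equals `ℋ¹(g ((a (i-1), a i)))`. -/
theorem statement_12 {d : ℕ}
    (g : ℝ → EuclideanSpace ℝ (Fin d)) (hg : ContinuousOn g (Set.Icc 0 1))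
    (hpos : eVariationOn g (Set.Icc 0 1) ≠ 0)
    (hrect : eVariationOn g (Set.Icc 0 1) ≠ ⊤)
    (hlen : μH[1] (g '' Set.Icc 0 1) = eVariationOn g (Set.Icc 0 1))
    (n : ℕ) (hn : 0 < n) (a : ℕ → ℝ) (ha0 : a 0 = 0) (han : a n = 1)
    (hmono : ∀ i < n, a i < a (i + 1)) :
    ∀ i < n, eVariationOn g (Set.Ioo (a i) (a (i + 1))) =
      μH[1] (g '' Set.Ioo (a i) (a (i + 1))) := by
  have amono : ∀ q ≤ n, ∀ p ≤ q, a p ≤ a q := by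
    intro q
    induction q with
    | zero => intro _ p hp; rw [Nat.le_zero.mp hp]
    | succ k ih =>
      intro hk p hp
      rcases Nat.lt_succ_iff_lt_or_eq.mp (Nat.lt_succ_of_le hp) with h | rfl
      · exact (ih (by omega) p (Nat.lt_succ_iff.mp h)).trans (hmono k (by omega)).le
      · exact le_rfl
  -- superadditivity of variation
  have hsup : ∀ k ≤ n, (∑ j ∈ Finset.range k, eVariationOn g (Set.Ioo (a j) (a (j+1)))) ≤
      eVariationOn g (Set.Icc (a 0) (a k)) := by
    intro k
    induction k with
    | zero => intro _; simp
    | succ k ih =>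
      intro hk
      rw [Finset.sum_range_succ]
      calc (∑ j ∈ Finset.range k, eVariationOn g (Set.Ioo (a j) (a (j+1))))
            + eVariationOn g (Set.Ioo (a k) (a (k+1)))
          ≤ eVariationOn g (Set.Icc (a 0) (a k)) + eVariationOn g (Set.Ioo (a k) (a (k+1))) :=
            add_le_add_left (ih (by omega)) _
        _ ≤ eVariationOn g (Set.Icc (a 0) (a k) ∪ Set.Ioo (a k) (a (k+1))) :=
            eVariationOn.add_le_union g (fun x hx y hy => hx.2.trans hy.1.le)
        _ ≤ eVariationOn g (Set.Icc (a 0) (a (k+1))) := by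
            refine eVariationOn.mono g (Set.union_subset ?_ ?_)
            · exact Set.Icc_subset_Icc le_rfl (amono (k+1) hk k (by omega))
            · exact fun y hy => ⟨(amono k (by omega) 0 (by omega)).trans hy.1.le, hy.2.le⟩
  -- covering of [a 0, a n]
  have hcov : ∀ k ≤ n, ∀ x ∈ Set.Icc (a 0) (a k),
      (∃ j < k, x ∈ Set.Ioo (a j) (a (j+1))) ∨ ∃ j ≤ k, x = a j := by
    intro k
    induction k with
    | zero => intro _ x hx; exact Or.inr ⟨0, le_rfl, le_antisymm hx.2 hx.1⟩
    | succ k ih =>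
      intro hk x hx
      rcases le_or_gt x (a k) with h | h
      · rcases ih (by omega) x ⟨hx.1, h⟩ with ⟨j, hj, hmem⟩ | ⟨j, hj, hxa⟩
        · exact Or.inl ⟨j, by omega, hmem⟩
        · exact Or.inr ⟨j, by omega, hxa⟩
      · rcases lt_or_eq_of_le hx.2 with h2 | h2
        · exact Or.inl ⟨k, by omega, h, h2⟩
        · exact Or.inr ⟨k+1, le_rfl, h2⟩
  -- image inclusion
  have himg_sub : g '' Set.Icc (a 0) (a n) ⊆
      (⋃ j ∈ Finset.range n, g '' Set.Ioo (a j) (a (j+1))) ∪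
        (⋃ j ∈ Finset.range (n+1), {g (a j)}) := by
    rintro _ ⟨x, hx, rfl⟩
    rcases hcov n le_rfl x hx with ⟨j, hj, hmem⟩ | ⟨j, hj, rfl⟩
    · exact Or.inl (Set.mem_biUnion (Finset.mem_range.mpr hj) ⟨x, hmem, rfl⟩)
    · exact Or.inr (Set.mem_biUnion (Finset.mem_range.mpr (by omega)) rfl)
  haveI : NoAtoms (μH[1] : Measure (EuclideanSpace ℝ (Fin d))) :=
    MeasureTheory.Measure.noAtoms_hausdorff (EuclideanSpace ℝ (Fin d)) one_pos
  have hμsub : μH[1] (g '' Set.Icc (a 0) (a n)) ≤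
      ∑ j ∈ Finset.range n, μH[1] (g '' Set.Ioo (a j) (a (j+1))) := by
    refine (measure_mono himg_sub).trans ((measure_union_le _ _).trans ?_)
    have h2 : μH[1] (⋃ j ∈ Finset.range (n+1), ({g (a j)} : Set (EuclideanSpace ℝ (Fin d)))) = 0 := by
      refine le_antisymm ((measure_biUnion_finset_le _ _).trans ?_) (zero_le)
      simp [measure_singleton]
      intro i _; exact (MeasureTheory.Measure.noAtoms_hausdorff _ one_pos).measure_singleton _
    rw [h2, add_zero]
    exact measure_biUnion_finset_le _ _
  have hIcc : Set.Icc (a 0) (a n) = Set.Icc (0:ℝ) 1 := by rw [ha0, han]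
  rw [hIcc] at hμsub
  have chain1 : (∑ j ∈ Finset.range n, eVariationOn g (Set.Ioo (a j) (a (j+1)))) ≤
      eVariationOn g (Set.Icc (0:ℝ) 1) := by
    have := hsup n le_rfl; rwa [hIcc] at this
  have chain2 : eVariationOn g (Set.Icc (0:ℝ) 1) ≤
      ∑ j ∈ Finset.range n, μH[1] (g '' Set.Ioo (a j) (a (j+1))) := hlen ▸ hμsub
  have hyx : ∀ j < n, μH[1] (g '' Set.Ioo (a j) (a (j+1))) ≤
      eVariationOn g (Set.Ioo (a j) (a (j+1))) := fun j _ =>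
    hausdorffMeasure_image_le_eVariationOn g _
  have hxle : ∀ j < n, eVariationOn g (Set.Ioo (a j) (a (j+1))) ≤
      eVariationOn g (Set.Icc (0:ℝ) 1) := by
    intro j hj
    refine eVariationOn.mono g (fun x hx => ?_)
    rw [← ha0, ← han]
    exact ⟨(amono j (by omega) 0 (by omega)).trans hx.1.le,
      hx.2.le.trans (amono n le_rfl (j+1) (by omega))⟩
  intro i hi
  set x : ℕ → ℝ≥0∞ := fun j => eVariationOn g (Set.Ioo (a j) (a (j+1))) with hx
  set y : ℕ → ℝ≥0∞ := fun j => μH[1] (g '' Set.Ioo (a j) (a (j+1))) with hy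
  have hC : (∑ j ∈ (Finset.range n).erase i, x j) ≠ ⊤ := by
    refine (ENNReal.sum_lt_top.mpr fun j hj => ?_).ne
    exact lt_of_le_of_lt (hxle j (Finset.mem_range.mp (Finset.mem_of_mem_erase hj)))
      (lt_top_iff_ne_top.mpr hrect)
  have hsx : (∑ j ∈ Finset.range n, x j) = x i + ∑ j ∈ (Finset.range n).erase i, x j :=
    (Finset.add_sum_erase _ _ (Finset.mem_range.mpr hi)).symm
  have hsy : (∑ j ∈ Finset.range n, y j) ≤ y i + ∑ j ∈ (Finset.range n).erase i, x j := by
    rw [← Finset.add_sum_erase _ _ (Finset.mem_range.mpr hi)]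
    exact add_le_add_right (Finset.sum_le_sum fun j hj =>
      hyx j (Finset.mem_range.mp (Finset.mem_of_mem_erase hj))) _
  have hxy : x i ≤ y i := by
    have h1 : x i + (∑ j ∈ (Finset.range n).erase i, x j) ≤
        y i + ∑ j ∈ (Finset.range n).erase i, x j := by
      rw [← hsx]
      exact (chain1.trans chain2).trans hsy
    exact (ENNReal.add_le_add_iff_right hC).mp h1
  exact le_antisymm hxy (hyx i hi)
end

section
/- Let g:[0,1]→ℝ^d be a curve with 0 < 𝓛(g) < ∞, |g′(t)| = 𝓛(g) for Lebesgue-a.e. t ∈ [0,1], and ℋ¹(Im g) = 𝓛(g). Let μ be a probability measure on [0,1] and let c > 0. Then μ ≥ cλ on [0,1] if and only if for every Borel set A ⊆ Im g one has (μ ∘ g^{−1})(A) ≥ c · ℋ¹(A)/𝓛(g), where μ ∘ g^{−1} denotes the pushforward of μ by g. -/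
open MeasureTheory Filter Set
open scoped ENNReal NNReal InnerProductSpace Topology

theorem aux_var_le {d : ℕ} (g : ℝ → EuclideanSpace ℝ (Fin d))
    (hrect : eVariationOn g (Set.Icc 0 1) ≠ ⊤)
    (g' : ℝ → EuclideanSpace ℝ (Fin d))
    (hderiv : ∀ᵐ t ∂(volume.restrict (Set.Icc (0:ℝ) 1)),
      HasDerivAt g (g' t) t ∧ ‖g' t‖ = (eVariationOn g (Set.Icc 0 1)).toReal) :
    ∀ s t : ℝ, 0 ≤ s → s ≤ t → t ≤ 1 →
      (eVariationOn g (Set.Icc 0 1 ∩ Set.Icc s t)).toReal ≤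
        (eVariationOn g (Set.Icc 0 1)).toReal * (t - s) := by
  set L : ℝ := (eVariationOn g (Set.Icc 0 1)).toReal with hL
  have hfin : ∀ u : Set ℝ, eVariationOn g (Set.Icc 0 1 ∩ u) ≠ ⊤ :=
    fun u => ((eVariationOn.mono g inter_subset_left).trans_lt (lt_top_iff_ne_top.mpr hrect)).ne
  set V : ℝ → ℝ := fun t => (eVariationOn g (Set.Icc 0 1 ∩ Set.Icc 0 t)).toReal with hVdef
  have hV : Monotone V := by
    intro a b hab
    exact ENNReal.toReal_mono (hfin _)
      (eVariationOn.mono g (inter_subset_inter_right _ (Icc_subset_Icc_right hab)))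
  have hVadd : ∀ s t : ℝ, 0 ≤ s → s ≤ t → t ≤ 1 →
      V s + (eVariationOn g (Set.Icc 0 1 ∩ Set.Icc s t)).toReal = V t := by
    intro s t hs hst ht
    have h := eVariationOn.Icc_add_Icc g (s := Set.Icc 0 1) hs hst ⟨hs, hst.trans ht⟩
    have h2 := congrArg ENNReal.toReal h
    rwa [ENNReal.toReal_add (hfin _) (hfin _)] at h2
  have hV0 : V 0 = 0 := by
    have h0 : eVariationOn g (Set.Icc 0 1 ∩ Set.Icc (0:ℝ) 0) = 0 := by
      apply eVariationOn.subsingleton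
      intro x hx y hy
      have hx' := hx.2; have hy' := hy.2
      simp only [Set.Icc_self, Set.mem_singleton_iff] at hx' hy'
      rw [hx', hy']
    show (eVariationOn g (Set.Icc 0 1 ∩ Set.Icc (0:ℝ) 0)).toReal = 0
    rw [h0]; rfl
  have hV1 : V 1 = L := by
    simp [hVdef, Set.inter_self, hL]
  have hdist : ∀ x y : ℝ, 0 ≤ x → x ≤ y → y ≤ 1 → ‖g y - g x‖ ≤ V y - V x := by
    intro x y hx hxy hy
    have h1 : edist (g y) (g x) ≤ eVariationOn g (Set.Icc 0 1 ∩ Set.Icc x y) :=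
      eVariationOn.edist_le g ⟨⟨hx.trans hxy, hy⟩, hxy, le_rfl⟩ ⟨⟨hx, hxy.trans hy⟩, le_rfl, hxy⟩
    have h2 : dist (g y) (g x) ≤ (eVariationOn g (Set.Icc 0 1 ∩ Set.Icc x y)).toReal := by
      rw [dist_edist]
      exact ENNReal.toReal_mono (hfin _) h1
    rw [← dist_eq_norm]
    have := hVadd x y hx hxy hy
    linarith
  -- Stieltjes machinery
  set F := hV.stieltjesFunction with hFdef
  have hae : ∀ᵐ x ∂(volume : Measure ℝ), x ∈ Set.Ioo (0:ℝ) 1 →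
      ENNReal.ofReal L ≤ F.measure.rnDeriv volume x := by
    filter_upwards [(ae_restrict_iff' measurableSet_Icc).mp hderiv, hV.ae_hasDerivAt,
      Measure.rnDeriv_lt_top F.measure volume] with x h1 h2 h3 hx
    obtain ⟨hgd, hgn⟩ := h1 ⟨hx.1.le, hx.2.le⟩
    set D : ℝ := (F.measure.rnDeriv volume x).toReal with hDdef
    have T1 : Tendsto (fun y => (V y - V x) / (y - x)) (𝓝[>] x) (𝓝 D) := by
      have h2' := h2
      rw [hasDerivAt_iff_tendsto_slope, slope_fun_def_field] at h2'
      exact h2'.mono_left (nhdsGT_le_nhdsNE x)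
    have T2 : Tendsto (fun y => ‖g y - g x‖ / (y - x)) (𝓝[>] x) (𝓝 L) := by
      have hsl := hgd
      rw [hasDerivAt_iff_tendsto_slope] at hsl
      have hn : Tendsto (fun y => ‖slope g x y‖) (𝓝[>] x) (𝓝 ‖g' x‖) :=
        ((continuous_norm.tendsto _).comp hsl).mono_left (nhdsGT_le_nhdsNE x)
      rw [hgn] at hn
      apply hn.congr'
      filter_upwards [self_mem_nhdsWithin] with y hy
      have hyx : 0 < y - x := sub_pos.2 hy
      rw [slope_def_module, norm_smul, Real.norm_eq_abs, abs_inv, abs_of_pos hyx,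
        div_eq_inv_mul]
    have hev : ∀ᶠ y in 𝓝[>] x, ‖g y - g x‖ / (y - x) ≤ (V y - V x) / (y - x) := by
      filter_upwards [Ioo_mem_nhdsGT_of_mem ⟨le_rfl, hx.2⟩] with y hy
      have hyx : 0 < y - x := sub_pos.2 hy.1
      have := hdist x y hx.1.le hy.1.le hy.2.le
      gcongr
    have hLD : L ≤ D := le_of_tendsto_of_tendsto T2 T1 hev
    rw [← ENNReal.ofReal_toReal h3.ne]
    exact ENNReal.ofReal_le_ofReal hLD
  have hlow : ∀ s t : ℝ, 0 ≤ s → s ≤ t → t ≤ 1 → L * (t - s) ≤ V t - V s := by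
    intro s t hs hst ht
    have key : ENNReal.ofReal (L * (t - s)) ≤ ENNReal.ofReal (V t - V s) := by
      calc ENNReal.ofReal (L * (t - s))
          = ENNReal.ofReal L * ENNReal.ofReal (t - s) :=
            ENNReal.ofReal_mul ENNReal.toReal_nonneg
        _ = ENNReal.ofReal L * volume (Set.Ioo s t) := by rw [Real.volume_Ioo]
        _ = ∫⁻ _ in Set.Ioo s t, ENNReal.ofReal L ∂volume := (setLIntegral_const _ _).symm
        _ ≤ ∫⁻ y in Set.Ioo s t, F.measure.rnDeriv volume y ∂volume := by
            apply lintegral_mono_ae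
            filter_upwards [ae_restrict_of_ae hae, ae_restrict_mem measurableSet_Ioo]
              with y h1 h2
            exact h1 ⟨lt_of_le_of_lt hs h2.1, lt_of_lt_of_le h2.2 ht⟩
        _ ≤ F.measure (Set.Ioo s t) := Measure.setLIntegral_rnDeriv_le _
        _ = ENNReal.ofReal (Function.leftLim F t - F s) := F.measure_Ioo
        _ ≤ ENNReal.ofReal (V t - V s) := by
            apply ENNReal.ofReal_le_ofReal
            have hFs : V s ≤ F s := hV.le_rightLim le_rfl
            have hFt : Function.leftLim F t ≤ V t := by
              apply le_of_tendsto (F.mono.tendsto_leftLim t)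
              filter_upwards [self_mem_nhdsWithin] with y hy
              have hy' : y < t := hy
              calc F y ≤ V ((y + t) / 2) := hV.rightLim_le (by linarith)
                _ ≤ V t := hV (by linarith)
            linarith
    exact (ENNReal.ofReal_le_ofReal_iff (sub_nonneg.2 (hV hst))).mp key
  intro s t hs hst ht
  have h1 := hlow 0 s le_rfl hs (hst.trans ht)
  have h2 := hlow t 1 (hs.trans hst) ht le_rfl
  have h3 := hVadd s t hs hst ht
  rw [hV0, hV1] at *
  linarith



open MeasureTheory Filter
open scoped ENNReal NNReal InnerProductSpace Topology

/-- Let `g : [0,1] → ℝ^d` be a curve with `0 < 𝓛(g) < ∞`,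
constant speed `|g'(t)| = 𝓛(g)` a.e., and `ℋ¹(Im g) = 𝓛(g)`. Let `μ` be a
probability measure on `[0,1]` (a probability measure on `ℝ` supported in `[0,1]`)
and `c > 0`. Then `μ ≥ c·λ` on `[0,1]` iff for every Borel set `A ⊆ Im g`,
`(μ ∘ g⁻¹)(A) ≥ c · ℋ¹(A) / 𝓛(g)`. -/
theorem statement_13 {d : ℕ}
    (g : ℝ → EuclideanSpace ℝ (Fin d)) (hg : ContinuousOn g (Set.Icc 0 1))
    (hpos : eVariationOn g (Set.Icc 0 1) ≠ 0)
    (hrect : eVariationOn g (Set.Icc 0 1) ≠ ⊤)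
    (g' : ℝ → EuclideanSpace ℝ (Fin d))
    (hderiv : ∀ᵐ t ∂(volume.restrict (Set.Icc (0:ℝ) 1)),
      HasDerivAt g (g' t) t ∧ ‖g' t‖ = (eVariationOn g (Set.Icc 0 1)).toReal)
    (hlen : μH[1] (g '' Set.Icc 0 1) = eVariationOn g (Set.Icc 0 1))
    (μ : Measure ℝ) [IsProbabilityMeasure μ] (hμsupp : μ (Set.Icc (0:ℝ) 1)ᶜ = 0)
    (c : ℝ) (hc : 0 < c) :
    (ENNReal.ofReal c • volume.restrict (Set.Icc (0:ℝ) 1) ≤ μ) ↔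
      ∀ A : Set (EuclideanSpace ℝ (Fin d)), A ⊆ g '' Set.Icc 0 1 → MeasurableSet A →
        ENNReal.ofReal c * μH[1] A / eVariationOn g (Set.Icc 0 1) ≤
          μ (g ⁻¹' A ∩ Set.Icc 0 1) := by
  set L : ℝ := (eVariationOn g (Set.Icc 0 1)).toReal with hLdef
  have hLpos : 0 < L := ENNReal.toReal_pos hpos hrect
  have hLeq : ENNReal.ofReal L = eVariationOn g (Set.Icc 0 1) := ENNReal.ofReal_toReal hrect
  have hLne0 : ENNReal.ofReal L ≠ 0 := (ENNReal.ofReal_pos.mpr hLpos).ne'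
  have hLnetop : ENNReal.ofReal L ≠ ⊤ := ENNReal.ofReal_ne_top
  -- Lipschitz bound
  have hvar := aux_var_le g hrect g' hderiv
  have hlipd : ∀ x ∈ Set.Icc (0:ℝ) 1, ∀ y ∈ Set.Icc (0:ℝ) 1,
      dist (g x) (g y) ≤ L * dist x y := by
    have key : ∀ x y : ℝ, x ∈ Set.Icc (0:ℝ) 1 → y ∈ Set.Icc (0:ℝ) 1 → x ≤ y →
        dist (g x) (g y) ≤ L * dist x y := by
      intro x y hx hy hxy
      have h1 : edist (g x) (g y) ≤ eVariationOn g (Set.Icc 0 1 ∩ Set.Icc x y) :=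
        eVariationOn.edist_le g ⟨hx, le_rfl, hxy⟩ ⟨hy, hxy, le_rfl⟩
      have hfin : eVariationOn g (Set.Icc 0 1 ∩ Set.Icc x y) ≠ ⊤ :=
        ((eVariationOn.mono g inter_subset_left).trans_lt (lt_top_iff_ne_top.mpr hrect)).ne
      have h2 : dist (g x) (g y) ≤ (eVariationOn g (Set.Icc 0 1 ∩ Set.Icc x y)).toReal := by
        rw [dist_edist]; exact ENNReal.toReal_mono hfin h1
      have h3 := hvar x y hx.1 hxy hy.2
      have h4 : dist x y = y - x := by rw [dist_comm, Real.dist_eq, abs_of_nonneg (by linarith)]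
      rw [h4]; linarith
    intro x hx y hy
    rcases le_total x y with h | h
    · exact key x y hx hy h
    · rw [dist_comm (g x), dist_comm x]; exact key y x hy hx h
  have hlip : LipschitzOnWith L.toNNReal g (Set.Icc 0 1) := by
    apply LipschitzOnWith.of_dist_le_mul
    intro x hx y hy
    rw [Real.coe_toNNReal _ hLpos.le]
    exact hlipd x hx y hy
  -- image bound
  have himg : ∀ S : Set ℝ, S ⊆ Set.Icc 0 1 →
      μH[1] (g '' S) ≤ ENNReal.ofReal L * volume S := by
    intro S hS
    have h1 : μH[1] (g '' S) ≤ (L.toNNReal : ℝ≥0∞) ^ (1:ℝ) * μH[1] S :=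
      (hlip.mono hS).hausdorffMeasure_image_le zero_le_one
    have h2 : (L.toNNReal : ℝ≥0∞) ^ (1:ℝ) = ENNReal.ofReal L := by
      rw [ENNReal.rpow_one]; rfl
    have h3 : μH[1] S = volume S := by rw [MeasureTheory.hausdorffMeasure_real]
    rw [h2, h3] at h1
    exact h1
  constructor
  · -- forward
    intro hle A hA hAm
    have h1 : (ENNReal.ofReal c • volume.restrict (Set.Icc (0:ℝ) 1)) (g ⁻¹' A ∩ Set.Icc 0 1)
        ≤ μ (g ⁻¹' A ∩ Set.Icc 0 1) := Measure.le_iff'.mp hle _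
    have h2 : (ENNReal.ofReal c • volume.restrict (Set.Icc (0:ℝ) 1)) (g ⁻¹' A ∩ Set.Icc 0 1)
        = ENNReal.ofReal c * volume (g ⁻¹' A ∩ Set.Icc 0 1) := by
      rw [Measure.smul_apply, smul_eq_mul, Measure.restrict_apply' measurableSet_Icc,
        inter_assoc, inter_self]
    have h3 : μH[1] A ≤ eVariationOn g (Set.Icc 0 1) * volume (g ⁻¹' A ∩ Set.Icc 0 1) := by
      have hsub : A ⊆ g '' (g ⁻¹' A ∩ Set.Icc 0 1) := by
        intro a ha
        obtain ⟨t, ht, rfl⟩ := hA ha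
        exact ⟨t, ⟨ha, ht⟩, rfl⟩
      calc μH[1] A ≤ μH[1] (g '' (g ⁻¹' A ∩ Set.Icc 0 1)) := measure_mono hsub
        _ ≤ ENNReal.ofReal L * volume (g ⁻¹' A ∩ Set.Icc 0 1) :=
            himg _ inter_subset_right
        _ = eVariationOn g (Set.Icc 0 1) * volume (g ⁻¹' A ∩ Set.Icc 0 1) := by rw [hLeq]
    rw [ENNReal.div_le_iff (hLeq ▸ hLne0) (hLeq ▸ hLnetop)]
    calc ENNReal.ofReal c * μH[1] A
        ≤ ENNReal.ofReal c * (eVariationOn g (Set.Icc 0 1) * volume (g ⁻¹' A ∩ Set.Icc 0 1)) :=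
          mul_le_mul_right h3 _
      _ = ENNReal.ofReal c * volume (g ⁻¹' A ∩ Set.Icc 0 1) * eVariationOn g (Set.Icc 0 1) := by
          ring
      _ ≤ μ (g ⁻¹' A ∩ Set.Icc 0 1) * eVariationOn g (Set.Icc 0 1) := by
          apply mul_le_mul_left
          rw [← h2]; exact h1
  · -- backward
    intro h
    have key : ∀ K : Set ℝ, K ⊆ Set.Icc 0 1 → IsCompact K →
        ENNReal.ofReal c * volume K ≤ μ K := by
      intro K hKI hK
      obtain ⟨T, hTopen, hTcount, hTeq⟩ := hK.isClosed.isGδ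
      haveI := hTcount.to_subtype
      have hU : Set.Icc (0:ℝ) 1 \ K = ⋃ t : T, (Set.Icc (0:ℝ) 1 ∩ (↑t : Set ℝ)ᶜ) := by
        ext x
        simp only [Set.mem_diff, Set.mem_iUnion, Set.mem_inter_iff, Set.mem_compl_iff, hTeq,
          Set.mem_sInter]
        constructor
        · rintro ⟨hxI, hxK⟩
          push_neg at hxK
          obtain ⟨t, htT, hxt⟩ := hxK
          exact ⟨⟨t, htT⟩, hxI, hxt⟩
        · rintro ⟨⟨t, htT⟩, hxI, hxt⟩
          exact ⟨hxI, fun hall => hxt (hall t htT)⟩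
      have gU_meas : MeasurableSet (g '' (Set.Icc (0:ℝ) 1 \ K)) := by
        rw [hU, Set.image_iUnion]
        apply MeasurableSet.iUnion
        intro t
        have hcpt : IsCompact (Set.Icc (0:ℝ) 1 ∩ (↑t : Set ℝ)ᶜ) :=
          isCompact_Icc.inter_right (isClosed_compl_iff.mpr (hTopen t t.2))
        exact (hcpt.image_of_continuousOn (hg.mono inter_subset_left)).measurableSet
      set A : Set (EuclideanSpace ℝ (Fin d)) :=
        g '' Set.Icc 0 1 \ g '' (Set.Icc (0:ℝ) 1 \ K) with hAdef
      have hAm : MeasurableSet A :=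
        ((isCompact_Icc.image_of_continuousOn hg).measurableSet).diff gU_meas
      have hpre : g ⁻¹' A ∩ Set.Icc 0 1 ⊆ K := by
        rintro t ⟨htA, htI⟩
        by_contra htK
        exact htA.2 ⟨t, ⟨htI, htK⟩, rfl⟩
      have main := h A diff_subset hAm
      have volU : volume (Set.Icc (0:ℝ) 1 \ K) = 1 - volume K := by
        rw [measure_diff hKI hK.measurableSet.nullMeasurableSet
          (hK.measure_lt_top).ne]
        congr 1
        simp [Real.volume_Icc]
      have hvolK1 : volume K ≤ 1 := by
        have := measure_mono hKI (μ := volume)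
        simpa [Real.volume_Icc] using this
      have hcover : eVariationOn g (Set.Icc 0 1) ≤
          μH[1] A + μH[1] (g '' (Set.Icc (0:ℝ) 1 \ K)) := by
        rw [← hlen]
        calc μH[1] (g '' Set.Icc 0 1)
            ≤ μH[1] (A ∪ g '' (Set.Icc (0:ℝ) 1 \ K)) := by
              apply measure_mono
              intro a ha
              by_cases hag : a ∈ g '' (Set.Icc (0:ℝ) 1 \ K)
              · exact Or.inr hag
              · exact Or.inl ⟨ha, hag⟩
          _ ≤ μH[1] A + μH[1] (g '' (Set.Icc (0:ℝ) 1 \ K)) := measure_union_le _ _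
      have hXle : μH[1] (g '' (Set.Icc (0:ℝ) 1 \ K)) ≤ ENNReal.ofReal L * (1 - volume K) := by
        rw [← volU]; exact himg _ diff_subset
      have hμHA : ENNReal.ofReal L * volume K ≤ μH[1] A := by
        have hsum : ENNReal.ofReal L * volume K + ENNReal.ofReal L * (1 - volume K)
            = eVariationOn g (Set.Icc 0 1) := by
          rw [← mul_add, add_tsub_cancel_of_le hvolK1, mul_one, hLeq]
        have hY : ENNReal.ofReal L * (1 - volume K) ≠ ⊤ :=
          ENNReal.mul_ne_top hLnetop (by
            exact ((tsub_le_self).trans_lt (by norm_num)).ne)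
        rw [← ENNReal.add_le_add_iff_right hY, hsum]
        exact hcover.trans (add_le_add_right hXle _)
      have hdivge : volume K ≤ μH[1] A / eVariationOn g (Set.Icc 0 1) := by
        rw [ENNReal.le_div_iff_mul_le (Or.inl (hLeq ▸ hLne0)) (Or.inl (hLeq ▸ hLnetop))]
        calc volume K * eVariationOn g (Set.Icc 0 1)
            = ENNReal.ofReal L * volume K := by rw [← hLeq]; ring
          _ ≤ μH[1] A := hμHA
      calc ENNReal.ofReal c * volume K
          ≤ ENNReal.ofReal c * (μH[1] A / eVariationOn g (Set.Icc 0 1)) :=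
            mul_le_mul_right hdivge _
        _ = ENNReal.ofReal c * μH[1] A / eVariationOn g (Set.Icc 0 1) := by
            rw [mul_div_assoc]
        _ ≤ μ (g ⁻¹' A ∩ Set.Icc 0 1) := main
        _ ≤ μ K := measure_mono hpre
    rw [Measure.le_iff]
    intro s hs
    rw [Measure.smul_apply, smul_eq_mul, Measure.restrict_apply hs]
    apply ENNReal.le_of_forall_pos_le_add
    intro ε hε hμs
    have hsI : MeasurableSet (s ∩ Set.Icc 0 1) := hs.inter measurableSet_Icc
    have hsIfin : volume (s ∩ Set.Icc (0:ℝ) 1) ≠ ⊤ := by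
      apply ne_of_lt
      calc volume (s ∩ Set.Icc (0:ℝ) 1) ≤ volume (Set.Icc (0:ℝ) 1) :=
            measure_mono inter_subset_right
        _ < ⊤ := by simp [Real.volume_Icc]
    set δ : ℝ≥0∞ := (ε : ℝ≥0∞) / ENNReal.ofReal c with hδdef
    have hδ0 : δ ≠ 0 := by
      apply ENNReal.div_ne_zero.mpr
      exact ⟨by exact_mod_cast hε.ne', ENNReal.ofReal_ne_top⟩
    obtain ⟨K, hKsub, hKcpt, hKvol⟩ := hsI.exists_isCompact_lt_add hsIfin hδ0
    have hKle := key K (hKsub.trans inter_subset_right) hKcpt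
    calc ENNReal.ofReal c * volume (s ∩ Set.Icc 0 1)
        ≤ ENNReal.ofReal c * (volume K + δ) := mul_le_mul_right hKvol.le _
      _ = ENNReal.ofReal c * volume K + ENNReal.ofReal c * δ := by rw [mul_add]
      _ ≤ μ K + ENNReal.ofReal c * δ := add_le_add_left hKle _
      _ ≤ μ s + ENNReal.ofReal c * δ := by
          apply add_le_add_left
          exact measure_mono (hKsub.trans inter_subset_left)
      _ ≤ μ s + ε := by
          apply add_le_add_right
          rw [hδdef, ENNReal.mul_div_cancel (ENNReal.ofReal_pos.mpr hc).ne' ENNReal.ofReal_ne_top]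
  done
end

section
/- Let g:[0,1]→ℝ^d be a curve with 0 < 𝓛(g) < ∞, |g′(t)| = 𝓛(g) for Lebesgue-a.e. t ∈ [0,1], and ℋ¹(Im g) = 𝓛(g). Then the pushforward λ ∘ g^{−1} of the Lebesgue measure λ on [0,1] by g equals the trace of ℋ¹/𝓛(g) on Im g; that is, for every Borel set A ⊆ Im g, λ(g^{−1}(A)) = ℋ¹(A)/𝓛(g). -/
open MeasureTheory Filter
open scoped ENNReal NNReal InnerProductSpace Topology

private lemma aux_mul_le_of_lt {L X s : ℝ} (hL : 0 ≤ L) (hX : 0 ≤ X)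
    (h : ∀ a, 0 ≤ a → a < s → L * a ≤ X) : L * s ≤ X := by
  rcases le_or_gt s 0 with hs | hs
  · nlinarith
  · have ht : Tendsto (fun a : ℝ => L * a) (𝓝[<] s) (𝓝 (L * s)) :=
      ((continuous_const.mul continuous_id).tendsto s).mono_left nhdsWithin_le_nhds
    refine le_of_tendsto ht ?_
    filter_upwards [Ioo_mem_nhdsLT_of_mem (Set.mem_Ioc.2 ⟨hs, le_rfl⟩)] with a ha
    exact h a ha.1.le ha.2

/-- Let `g : [0,1] → ℝ^d` be a curve with `0 < 𝓛(g) < ∞`,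
constant speed `|g'(t)| = 𝓛(g)` a.e., and `ℋ¹(Im g) = 𝓛(g)`. Then the pushforward
of Lebesgue measure `λ` on `[0,1]` by `g` is the trace of `ℋ¹/𝓛(g)` on `Im g`:
for every Borel set `A ⊆ Im g`, `λ(g⁻¹(A)) = ℋ¹(A)/𝓛(g)`. -/
theorem statement_14 {d : ℕ}
    (g : ℝ → EuclideanSpace ℝ (Fin d)) (hg : ContinuousOn g (Set.Icc 0 1))
    (hpos : eVariationOn g (Set.Icc 0 1) ≠ 0)
    (hrect : eVariationOn g (Set.Icc 0 1) ≠ ⊤)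
    (g' : ℝ → EuclideanSpace ℝ (Fin d))
    (hderiv : ∀ᵐ t ∂(volume.restrict (Set.Icc (0:ℝ) 1)),
      HasDerivAt g (g' t) t ∧ ‖g' t‖ = (eVariationOn g (Set.Icc 0 1)).toReal)
    (hlen : μH[1] (g '' Set.Icc 0 1) = eVariationOn g (Set.Icc 0 1)) :
    ∀ A : Set (EuclideanSpace ℝ (Fin d)), A ⊆ g '' Set.Icc 0 1 → MeasurableSet A →
      volume (g ⁻¹' A ∩ Set.Icc 0 1) = μH[1] A / eVariationOn g (Set.Icc 0 1) := by
  intro A hAsub hAmeas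
  set I : Set ℝ := Set.Icc (0:ℝ) 1 with hIdef
  set Linf : ℝ≥0∞ := eVariationOn g I with hLinf
  set L : ℝ := Linf.toReal with hLdef
  have hL0 : 0 ≤ L := ENNReal.toReal_nonneg
  -- finiteness of variation on subsets
  have hsubfin : ∀ {s : Set ℝ}, s ⊆ I → eVariationOn g s ≠ ⊤ :=
    fun h => ((eVariationOn.mono g h).trans_lt hrect.lt_top).ne
  -- the variation function
  set V : ℝ → ℝ := fun x => (eVariationOn g (I ∩ Set.Iic x)).toReal with hVdef
  have hVmono : Monotone V := fun x y hxy =>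
    ENNReal.toReal_mono (hsubfin Set.inter_subset_left)
      (eVariationOn.mono g (Set.inter_subset_inter_right _ (Set.Iic_subset_Iic.2 hxy)))
  have hIic_eq : ∀ x : ℝ, I ∩ Set.Iic x = I ∩ Set.Icc 0 x := by
    intro x
    ext t
    simp only [hIdef, Set.mem_inter_iff, Set.mem_Icc, Set.mem_Iic]
    constructor
    · rintro ⟨⟨h1, h2⟩, h3⟩; exact ⟨⟨h1, h2⟩, h1, h3⟩
    · rintro ⟨⟨h1, h2⟩, _, h3⟩; exact ⟨⟨h1, h2⟩, h3⟩
  have hV0 : V 0 = 0 := by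
    have hsub : (I ∩ Set.Iic 0).Subsingleton := by
      rintro a ⟨⟨ha0, _⟩, ha⟩ b ⟨⟨hb0, _⟩, hb⟩
      have : a = 0 := le_antisymm ha ha0
      have : b = 0 := le_antisymm hb hb0
      simp_all
    simp [hVdef, eVariationOn.subsingleton g hsub]
  have hV1 : V 1 = L := by
    have : I ∩ Set.Iic 1 = I := Set.inter_eq_left.2 fun t ht => ht.2
    simp [hVdef, this, hLdef, hLinf]
  -- splitting of variation
  have hsplit : ∀ s t : ℝ, 0 ≤ s → s ≤ t → t ≤ 1 →
      V s + (eVariationOn g (I ∩ Set.Icc s t)).toReal = V t := by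
    intro s t h0 hst ht1
    have hmem : s ∈ I := ⟨h0, hst.trans ht1⟩
    have hadd := eVariationOn.Icc_add_Icc g h0 hst hmem
    have := ENNReal.toReal_add (hsubfin Set.inter_subset_left)
      (hsubfin Set.inter_subset_left) (a := eVariationOn g (I ∩ Set.Icc 0 s))
      (b := eVariationOn g (I ∩ Set.Icc s t))
    rw [hadd] at this
    simp only [hVdef, hIic_eq]
    linarith [this]
  have hVnonneg : ∀ s t : ℝ, s ≤ t → 0 ≤ V t - V s := fun s t h =>
    sub_nonneg.2 (hVmono h)
  -- curve increments bounded by variation increments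
  have hgV : ∀ s t : ℝ, s ∈ I → t ∈ I → s ≤ t → ‖g t - g s‖ ≤ V t - V s := by
    intro s t hs ht hst
    have h1 : edist (g s) (g t) ≤ eVariationOn g (I ∩ Set.Icc s t) :=
      eVariationOn.edist_le g ⟨hs, le_rfl, hst⟩ ⟨ht, hst, le_rfl⟩
    have h2 := ENNReal.toReal_mono (hsubfin Set.inter_subset_left) h1
    rw [← dist_edist] at h2
    rw [dist_eq_norm, norm_sub_rev] at h2
    have h3 := hsplit s t hs.1 hst ht.2
    linarith
  -- Stieltjes function associated to `V`
  set F := hVmono.stieltjesFunction with hFdef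
  set μF := F.measure with hμF
  have hFae := hVmono.ae_hasDerivAt
  -- a.e. lower bound on the Radon–Nikodym derivative
  have hrestr : volume.restrict (Set.Ioo (0:ℝ) 1) = volume.restrict I :=
    Measure.restrict_congr_set Ioo_ae_eq_Icc
  have key_ae : ∀ᵐ t ∂(volume.restrict I),
      ENNReal.ofReal L ≤ μF.rnDeriv volume t := by
    rw [← hrestr]
    have hderiv' : ∀ᵐ t ∂(volume.restrict (Set.Ioo (0:ℝ) 1)),
        HasDerivAt g (g' t) t ∧ ‖g' t‖ = L := by rwa [hrestr]
    filter_upwards [hderiv', ae_restrict_of_ae hFae,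
      ae_restrict_of_ae (Measure.rnDeriv_lt_top μF volume),
      ae_restrict_mem measurableSet_Ioo] with t ht hVd hlt hmem
    obtain ⟨hgd, hgL⟩ := ht
    have htI : t ∈ I := ⟨hmem.1.le, hmem.2.le⟩
    have h1 : Tendsto (slope V t) (𝓝[>] t) (𝓝 ((μF.rnDeriv volume t).toReal)) :=
      (hasDerivAt_iff_tendsto_slope.1 hVd).mono_left
        (nhdsWithin_mono t fun y hy => hy.ne')
    have h2 : Tendsto (fun y => ‖slope g t y‖) (𝓝[>] t) (𝓝 L) := by
      have := ((hasDerivAt_iff_tendsto_slope.1 hgd).mono_left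
        (nhdsWithin_mono t fun y (hy : t < y) => hy.ne')).norm
      rwa [hgL] at this
    have hineq : ∀ᶠ y in 𝓝[>] t, ‖slope g t y‖ ≤ slope V t y := by
      filter_upwards [Ioo_mem_nhdsGT_of_mem (Set.mem_Ico.2 ⟨le_rfl, hmem.2⟩)] with y hy
      have hyI : y ∈ I := ⟨hmem.1.le.trans hy.1.le, hy.2.le⟩
      have hlt' : (0:ℝ) < y - t := sub_pos.2 hy.1
      have hnorm : ‖slope g t y‖ = ‖g y - g t‖ / (y - t) := by
        rw [slope_def_module, norm_smul, norm_inv, Real.norm_eq_abs,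
          abs_of_pos hlt', inv_mul_eq_div]
      rw [hnorm, slope_def_field, div_le_div_iff_of_pos_right hlt']
      exact hgV t y htI hyI hy.1.le
    have hle : L ≤ (μF.rnDeriv volume t).toReal :=
      le_of_tendsto_of_tendsto h2 h1 hineq
    calc ENNReal.ofReal L ≤ ENNReal.ofReal ((μF.rnDeriv volume t).toReal) :=
          ENNReal.ofReal_le_ofReal hle
      _ = μF.rnDeriv volume t := ENNReal.ofReal_toReal hlt.ne
  -- lower bound on increments of `F`
  have hF_lb : ∀ a b : ℝ, 0 ≤ a → a ≤ b → b ≤ 1 → L * (b - a) ≤ F b - F a := by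
    intro a b ha hab hb1
    have h0 : ENNReal.ofReal (L * (b - a)) ≤ μF (Set.Ioc a b) := by
      calc ENNReal.ofReal (L * (b - a))
          = ENNReal.ofReal L * volume (Set.Ioc a b) := by
            rw [Real.volume_Ioc, ENNReal.ofReal_mul hL0]
        _ = ∫⁻ _ in Set.Ioc a b, ENNReal.ofReal L ∂volume := by
            rw [setLIntegral_const]
        _ ≤ ∫⁻ x in Set.Ioc a b, μF.rnDeriv volume x ∂volume := by
            refine lintegral_mono_ae ?_
            refine ae_restrict_of_ae_restrict_of_subset ?_ key_ae
            exact fun x hx => ⟨ha.trans hx.1.le, hx.2.trans hb1⟩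
        _ ≤ μF (Set.Ioc a b) := Measure.setLIntegral_rnDeriv_le _
    rw [hμF, StieltjesFunction.measure_Ioc] at h0
    exact (ENNReal.ofReal_le_ofReal_iff (sub_nonneg.2 (F.mono hab))).1 h0
  have hVF : ∀ x : ℝ, V x ≤ F x := fun x => by
    rw [hFdef, hVmono.stieltjesFunction_eq]; exact hVmono.le_rightLim le_rfl
  have hFV : ∀ x y : ℝ, x < y → F x ≤ V y := fun x y h => by
    rw [hFdef, hVmono.stieltjesFunction_eq]; exact hVmono.rightLim_le h
  -- lower bounds on the variation function itself
  have piece1 : ∀ s : ℝ, 0 ≤ s → s ≤ 1 → L * s ≤ V s := by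
    intro s hs hs1
    have := aux_mul_le_of_lt (s := s) hL0 (hV0 ▸ hVnonneg 0 s hs)
      (fun a ha has => by
        have h1 := hF_lb 0 a le_rfl ha (by linarith)
        have h2 := hFV a s has
        have h3 := hVF 0
        simp only [sub_zero] at h1
        linarith)
    linarith [hVnonneg 0 s hs, hV0, this]
  have piece2 : ∀ t : ℝ, 0 ≤ t → t ≤ 1 → L * (1 - t) ≤ V 1 - V t := by
    intro t ht ht1
    refine aux_mul_le_of_lt hL0 (hVnonneg t 1 ht1) fun a ha has => ?_
    have hb1 : t + a < 1 := by linarith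
    have h1 := hF_lb t (t + a) ht (by linarith) hb1.le
    have h2 := hFV (t + a) 1 hb1
    have h3 := hVF t
    have : t + a - t = a := by ring
    rw [this] at h1
    linarith
  -- the variation on subintervals is bounded by `L * length`
  have hVar_le : ∀ s t : ℝ, 0 ≤ s → s ≤ t → t ≤ 1 →
      (eVariationOn g (I ∩ Set.Icc s t)).toReal ≤ L * (t - s) := by
    intro s t hs hst ht1
    have h1 := hsplit s t hs hst ht1
    have h2 := piece1 s hs (hst.trans ht1)
    have h3 := piece2 t (hs.trans hst) ht1
    rw [hV1] at h3
    linarith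
  -- `g` is Lipschitz on `I` with constant `L`
  have hlip : LipschitzOnWith L.toNNReal g I := by
    rw [lipschitzOnWith_iff_dist_le_mul]
    have key : ∀ x y : ℝ, x ∈ I → y ∈ I → x ≤ y →
        dist (g x) (g y) ≤ L * dist x y := by
      intro x y hx hy hxy
      have h1 := hgV x y hx hy hxy
      have h2 := hsplit x y hx.1 hxy hy.2
      have h3 := hVar_le x y hx.1 hxy hy.2
      rw [dist_eq_norm, norm_sub_rev, Real.dist_eq, abs_of_nonpos (by linarith), neg_sub]
      linarith
    intro x hx y hy
    rw [Real.coe_toNNReal _ hL0]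
    rcases le_total x y with h | h
    · exact key x y hx hy h
    · rw [dist_comm, dist_comm x y]; exact key y x hy hx h
  -- consequence: Hausdorff measure of images
  have hcoe : (L.toNNReal : ℝ≥0∞) = Linf := by
    rw [hLdef, ENNReal.toReal, Real.toNNReal_coe, ENNReal.coe_toNNReal hrect]
  have himage : ∀ E : Set ℝ, E ⊆ I → μH[1] (g '' E) ≤ Linf * volume E := by
    intro E hE
    have h := (hlip.mono hE).hausdorffMeasure_image_le (le_of_lt one_pos)
    rw [ENNReal.rpow_one] at h
    rwa [hausdorffMeasure_real, hcoe] at h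
  -- conclude
  set E : Set ℝ := g ⁻¹' A ∩ I with hEdef
  have hEsub : E ⊆ I := Set.inter_subset_right
  have hEmeas : MeasurableSet E := by
    have hgm : Measurable (I.restrict g) :=
      (continuousOn_iff_continuous_restrict.1 hg).measurable
    have hEeq : E = Subtype.val '' (I.restrict g ⁻¹' A) := by
      ext x
      simp only [hEdef, Set.mem_inter_iff, Set.mem_preimage, Set.mem_image,
        Set.restrict_apply, Subtype.exists, exists_and_right, exists_eq_right]
      tauto
    rw [hEeq]
    exact (MeasurableEmbedding.subtype_coe measurableSet_Icc).measurableSet_image.2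
      (hgm hAmeas)
  have hvolE_ne : volume E ≠ ⊤ := by
    refine ((measure_mono hEsub).trans_lt ?_).ne
    simp [hIdef, Real.volume_Icc]
  have hvolI : volume I = 1 := by simp [hIdef, Real.volume_Icc]
  have hmle : volume E ≤ 1 := hvolI ▸ measure_mono hEsub
  have hAeq : g '' E = A := by
    apply Set.Subset.antisymm
    · rintro _ ⟨t, ⟨htA, _⟩, rfl⟩; exact htA
    · intro a ha
      obtain ⟨t, htI, rfl⟩ := hAsub ha
      exact ⟨t, ⟨ha, htI⟩, rfl⟩
  have hcomp : g '' I \ A ⊆ g '' (I \ E) := by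
    rintro x ⟨⟨t, htI, rfl⟩, hxA⟩
    exact ⟨t, ⟨htI, fun h => hxA h.1⟩, rfl⟩
  have hm1 : μH[1] A ≤ Linf * volume E := hAeq ▸ himage E hEsub
  have hvol_diff : volume (I \ E) = 1 - volume E := by
    rw [measure_diff hEsub hEmeas.nullMeasurableSet hvolE_ne, hvolI]
  have hm2 : μH[1] (g '' I \ A) ≤ Linf * (1 - volume E) := by
    refine le_trans (measure_mono hcomp) ?_
    rw [← hvol_diff]
    exact himage _ Set.diff_subset
  have hsub2 : Linf ≤ μH[1] A + Linf * (1 - volume E) := by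
    calc Linf = μH[1] (g '' I) := hlen.symm
      _ ≤ μH[1] (A ∪ (g '' I \ A)) := measure_mono fun x hx =>
          (em (x ∈ A)).elim Or.inl fun h => Or.inr ⟨hx, h⟩
      _ ≤ μH[1] A + μH[1] (g '' I \ A) := measure_union_le _ _
      _ ≤ μH[1] A + Linf * (1 - volume E) := add_le_add le_rfl hm2
  have hfin_piece : Linf * (1 - volume E) ≠ ⊤ :=
    ENNReal.mul_ne_top hrect (by
      exact ((tsub_le_self).trans_lt ENNReal.one_lt_top).ne)
  have key2 : Linf * volume E ≤ μH[1] A := by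
    have h1 : Linf * (1 - volume E) + Linf * volume E = Linf := by
      rw [← mul_add, tsub_add_cancel_of_le hmle, mul_one]
    have h2 : Linf * (1 - volume E) + Linf * volume E
        ≤ Linf * (1 - volume E) + μH[1] A := by
      rw [h1, add_comm]
      exact hsub2
    exact (ENNReal.add_le_add_iff_left hfin_piece).1 h2
  have hfinal : μH[1] A = Linf * volume E := le_antisymm hm1 key2
  exact (ENNReal.eq_div_iff hpos hrect).2 hfinal.symm
end

section
/- Under the model below, with f*_n := f̂_{n, a_n⌊𝓛(g)/a_n⌋}, the empirical distortion Δ_n(f*_n) converges in probability to 0 as n → ∞. -/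
open MeasureTheory Filter
open scoped ENNReal NNReal InnerProductSpace Topology

noncomputable section

/-- Empirical distortion `Δ_n(f) = (1/n) Σ_{i<n} V (d (x i, Im f))` of a curve `f`
with respect to the points `x 0, …, x (n-1)`. -/
def empDistortion {d : ℕ} (V : ℝ → ℝ) (n : ℕ) (x : ℕ → EuclideanSpace ℝ (Fin d))
    (f : ℝ → EuclideanSpace ℝ (Fin d)) : ℝ :=
  (n : ℝ)⁻¹ * ∑ i ∈ Finset.range n, V (Metric.infDist (x i) (f '' Set.Icc 0 1))

/-- The family `M_c` of probability measures on `[0,1]` dominating `c` times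
Lebesgue measure on `[0,1]` (as measures on `ℝ` supported in `[0,1]`). -/
def Mc (c : ℝ) : Set (Measure ℝ) :=
  {μ | IsProbabilityMeasure μ ∧ μ (Set.Icc (0:ℝ) 1)ᶜ = 0 ∧
    ENNReal.ofReal c • volume.restrict (Set.Icc (0:ℝ) 1) ≤ μ}

/-- Lévy–Prokhorov distance from a measure to the family `M_c`. -/
def distToMc (c : ℝ) (μ : Measure ℝ) : ℝ :=
  sInf (levyProkhorovDist μ '' Mc c)

/-- `T(f,x)`: the largest `t ∈ [0,1]` at which `|x - f t|` is minimal. -/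
def Tmax {d : ℕ} (f : ℝ → EuclideanSpace ℝ (Fin d)) (x : EuclideanSpace ℝ (Fin d)) : ℝ :=
  sSup {t ∈ Set.Icc (0:ℝ) 1 | dist x (f t) = Metric.infDist x (f '' Set.Icc 0 1)}

/-- Empirical measure `(1/n) Σ_{i<n} δ_{T(f, x i)}` on `[0,1] ⊆ ℝ`. -/
def empT {d : ℕ} (n : ℕ) (f : ℝ → EuclideanSpace ℝ (Fin d))
    (x : ℕ → EuclideanSpace ℝ (Fin d)) : Measure ℝ :=
  (n : ℝ≥0∞)⁻¹ • ∑ i ∈ Finset.range n, Measure.dirac (Tmax f (x i))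

/-- The penalized criterion `L² 𝒟(empirical T-measure, M_c) + Δ_n(f)`. -/
def crit {d : ℕ} (c : ℝ) (V : ℝ → ℝ) (n : ℕ) (x : ℕ → EuclideanSpace ℝ (Fin d))
    (f : ℝ → EuclideanSpace ℝ (Fin d)) (L : ℝ) : ℝ :=
  L ^ 2 * distToMc c (empT n f x) + empDistortion V n x f

end

/-- In the small-noise model, with
`f*_n = f̂_{n, a_n ⌊𝓛(g)/a_n⌋}`, the empirical distortion `Δ_n(f*_n)` converges
in probability to `0` as `n → ∞`. -/
theorem statement_16 {d : ℕ}
    (V : ℝ → ℝ)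
    (hVnonneg : ∀ x ∈ Set.Ici (0:ℝ), 0 ≤ V x)
    (hVlsc : LowerSemicontinuousOn V (Set.Ici 0))
    (hVmono : StrictMonoOn V (Set.Ici 0))
    (hVcont0 : ContinuousWithinAt V (Set.Ici 0) 0) (hV0 : V 0 = 0)
    (C : ℝ) (hC : 0 < C)
    (hVsub : ∀ x ∈ Set.Ici (0:ℝ), ∀ y ∈ Set.Ici (0:ℝ), V (x + y) ≤ C * (V x + V y))
    (c : ℝ) (hc : 0 < c)
    (g : ℝ → EuclideanSpace ℝ (Fin d)) (hgc : ContinuousOn g (Set.Icc 0 1))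
    (Λ : ℝ) (hgΛ : eVariationOn g (Set.Icc 0 1) ≤ ENNReal.ofReal Λ)
    (g' : ℝ → EuclideanSpace ℝ (Fin d))
    (hg' : ∀ᵐ t ∂(volume.restrict (Set.Icc (0:ℝ) 1)),
      HasDerivAt g (g' t) t ∧ ‖g' t‖ = (eVariationOn g (Set.Icc 0 1)).toReal)
    (hgH : μH[1] (g '' Set.Icc 0 1) = eVariationOn g (Set.Icc 0 1))
    {Ω : Type*} [MeasurableSpace Ω] (P : Measure Ω) [IsProbabilityMeasure P]
    (U : ℕ → ℕ → Ω → ℝ) (eps : ℕ → ℕ → Ω → EuclideanSpace ℝ (Fin d))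
    (hUmeas : ∀ n, ∀ i < n, Measurable (U n i))
    (hUrange : ∀ n i ω, U n i ω ∈ Set.Icc (0:ℝ) 1)
    (hUlaw : ∀ n, ∀ i < n, P.map (U n i) ∈ Mc c)
    (hUindep : ∀ n, ProbabilityTheory.iIndepFun
      (fun i : Fin n => U n (i : ℕ)) P)
    (X : ℕ → ℕ → Ω → EuclideanSpace ℝ (Fin d))
    (hX : ∀ n i ω, X n i ω = g (U n i ω) + eps n i ω)
    (hnoise : ∀ δ > (0:ℝ), Tendsto
      (fun n : ℕ => P {ω | δ ≤ (n : ℝ)⁻¹ * ∑ i ∈ Finset.range n, V ‖eps n i ω‖}) atTop (𝓝 0))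
    (fhat : ℕ → ℝ → Ω → ℝ → EuclideanSpace ℝ (Fin d))
    (hfhatLip : ∀ n L ω, 0 ≤ L →
      LipschitzOnWith (Real.toNNReal L) (fhat n L ω) (Set.Icc 0 1))
    (hfhatOpt : ∀ n L ω, 0 ≤ L → ∀ f : ℝ → EuclideanSpace ℝ (Fin d),
      ContinuousOn f (Set.Icc 0 1) → eVariationOn f (Set.Icc 0 1) ≤ ENNReal.ofReal L →
      empDistortion V n (fun i => X n i ω) (fhat n L ω) ≤
        empDistortion V n (fun i => X n i ω) f)
    (a : ℕ → ℝ) (ha : ∀ n, 0 < a n) (haLim : Tendsto a atTop (𝓝 0))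
    :
    ∀ δ > (0:ℝ), Tendsto (fun n => P {ω | δ ≤
      empDistortion V n (fun i => X n i ω)
        (fhat n (a n * ⌊(eVariationOn g (Set.Icc 0 1)).toReal / a n⌋₊) ω)})
      atTop (𝓝 0) := by
  intro δ hδ
  set 𝓛 : ℝ := (eVariationOn g (Set.Icc 0 1)).toReal with h𝓛
  have hfin : eVariationOn g (Set.Icc 0 1) ≠ ⊤ :=
    (lt_of_le_of_lt hgΛ ENNReal.ofReal_lt_top).ne
  have hevar : eVariationOn g (Set.Icc 0 1) = ENNReal.ofReal 𝓛 :=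
    (ENNReal.ofReal_toReal hfin).symm
  have h𝓛0 : 0 ≤ 𝓛 := ENNReal.toReal_nonneg
  -- key pointwise bound
  have key : ∀ n : ℕ, 1 ≤ n → ∀ ω,
      empDistortion V n (fun i => X n i ω) (fhat n (a n * ⌊𝓛 / a n⌋₊) ω)
        ≤ C * ((n : ℝ)⁻¹ * ∑ i ∈ Finset.range n, V ‖eps n i ω‖) + C * V (a n) := by
    intro n hn ω
    set L : ℝ := a n * ⌊𝓛 / a n⌋₊ with hLdef
    have han : (0:ℝ) < a n := ha n
    have hL0 : 0 ≤ L := mul_nonneg han.le (Nat.cast_nonneg _)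
    have hL𝓛 : L ≤ 𝓛 := by
      have h1 : (⌊𝓛 / a n⌋₊ : ℝ) ≤ 𝓛 / a n := Nat.floor_le (div_nonneg h𝓛0 han.le)
      calc L ≤ a n * (𝓛 / a n) := by
              exact mul_le_mul_of_nonneg_left h1 han.le
        _ = 𝓛 := by field_simp
    have h𝓛La : 𝓛 - L ≤ a n := by
      have h1 : 𝓛 / a n < ⌊𝓛 / a n⌋₊ + 1 := Nat.lt_floor_add_one _
      have h2 : 𝓛 < a n * (⌊𝓛 / a n⌋₊ + 1) := by
        have := mul_lt_mul_of_pos_left h1 han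
        rwa [mul_div_cancel₀ _ han.ne'] at this
      nlinarith
    set lam : ℝ := L / 𝓛 with hlamdef
    have hlam0 : 0 ≤ lam := div_nonneg hL0 h𝓛0
    have hlam1 : lam ≤ 1 := div_le_one_of_le₀ hL𝓛 h𝓛0
    have hlamL : lam * 𝓛 = L := by
      rcases eq_or_lt_of_le h𝓛0 with h | h
      · have hL0' : L = 0 := le_antisymm (hL𝓛.trans h.symm.le) hL0
        simp [hlamdef, hL0', ← h]
      · rw [hlamdef, div_mul_cancel₀ _ h.ne']
    set f : ℝ → EuclideanSpace ℝ (Fin d) := fun t => g 0 + lam • (g t - g 0) with hfdef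
    have hfc : ContinuousOn f (Set.Icc 0 1) :=
      continuousOn_const.add ((hgc.sub continuousOn_const).const_smul lam)
    -- variation bound for f
    have hfvar : eVariationOn f (Set.Icc 0 1) ≤ ENNReal.ofReal L := by
      have hlip : LipschitzWith (Real.toNNReal lam)
          (fun x : EuclideanSpace ℝ (Fin d) => g 0 + lam • (x - g 0)) := by
        apply LipschitzWith.of_dist_le_mul
        intro x y
        have : (g 0 + lam • (x - g 0)) - (g 0 + lam • (y - g 0)) = lam • (x - y) := by
          module
        rw [dist_eq_norm, this, norm_smul, Real.norm_eq_abs, abs_of_nonneg hlam0,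
          Real.coe_toNNReal _ hlam0, dist_eq_norm]
      have h1 : eVariationOn f (Set.Icc 0 1)
          ≤ (Real.toNNReal lam : ℝ≥0∞) * eVariationOn g (Set.Icc 0 1) := by
        have := (hlip.lipschitzOnWith (s := Set.univ)).comp_eVariationOn_le
          (Set.mapsTo_univ g (Set.Icc (0:ℝ) 1))
        exact this
      calc eVariationOn f (Set.Icc 0 1)
          ≤ (Real.toNNReal lam : ℝ≥0∞) * eVariationOn g (Set.Icc 0 1) := h1
        _ = ENNReal.ofReal lam * ENNReal.ofReal 𝓛 := by rw [hevar]; rfl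
        _ = ENNReal.ofReal (lam * 𝓛) := (ENNReal.ofReal_mul hlam0).symm
        _ = ENNReal.ofReal L := by rw [hlamL]
    -- pointwise distance bound
    have hub : ∀ i, Metric.infDist (X n i ω) (f '' Set.Icc 0 1) ≤ ‖eps n i ω‖ + a n := by
      intro i
      have hu := hUrange n i ω
      have hmem : f (U n i ω) ∈ f '' Set.Icc 0 1 := Set.mem_image_of_mem f hu
      have hgu : ‖g (U n i ω) - g 0‖ ≤ 𝓛 := by
        have h0 : (0:ℝ) ∈ Set.Icc (0:ℝ) 1 := by norm_num
        have := eVariationOn.edist_le g hu h0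
        rw [hevar, edist_dist] at this
        have := (ENNReal.ofReal_le_ofReal_iff h𝓛0).mp this
        rwa [dist_eq_norm] at this
      have hdistf : dist (X n i ω) (f (U n i ω)) ≤ ‖eps n i ω‖ + a n := by
        have hXi := hX n i ω
        have heq : X n i ω - f (U n i ω) = eps n i ω + (1 - lam) • (g (U n i ω) - g 0) := by
          rw [hXi, hfdef]; module
        calc dist (X n i ω) (f (U n i ω))
            = ‖eps n i ω + (1 - lam) • (g (U n i ω) - g 0)‖ := by rw [dist_eq_norm, heq]
          _ ≤ ‖eps n i ω‖ + ‖(1 - lam) • (g (U n i ω) - g 0)‖ := norm_add_le _ _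
          _ = ‖eps n i ω‖ + (1 - lam) * ‖g (U n i ω) - g 0‖ := by
              rw [norm_smul, Real.norm_eq_abs, abs_of_nonneg (by linarith)]
          _ ≤ ‖eps n i ω‖ + (1 - lam) * 𝓛 := by
              have := mul_le_mul_of_nonneg_left hgu (by linarith : (0:ℝ) ≤ 1 - lam)
              linarith
          _ ≤ ‖eps n i ω‖ + a n := by
              have : (1 - lam) * 𝓛 = 𝓛 - L := by rw [sub_mul, one_mul, hlamL]
              linarith
      exact (Metric.infDist_le_dist_of_mem hmem).trans hdistf
    -- per-term bound via monotonicity and sub-additivity of V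
    have hterm : ∀ i, V (Metric.infDist (X n i ω) (f '' Set.Icc 0 1))
        ≤ C * (V ‖eps n i ω‖ + V (a n)) := by
      intro i
      have h1 : V (Metric.infDist (X n i ω) (f '' Set.Icc 0 1)) ≤ V (‖eps n i ω‖ + a n) :=
        (hVmono.monotoneOn) (Set.mem_Ici.mpr Metric.infDist_nonneg)
          (Set.mem_Ici.mpr (by positivity)) (hub i)
      exact h1.trans (hVsub _ (Set.mem_Ici.mpr (norm_nonneg _)) _ (Set.mem_Ici.mpr (ha n).le))
    -- sum up
    have hnR : (0:ℝ) < (n:ℝ) := by exact_mod_cast hn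
    have hsum : empDistortion V n (fun i => X n i ω) f
        ≤ C * ((n : ℝ)⁻¹ * ∑ i ∈ Finset.range n, V ‖eps n i ω‖) + C * V (a n) := by
      rw [empDistortion]
      have h1 : ∑ i ∈ Finset.range n, V (Metric.infDist (X n i ω) (f '' Set.Icc 0 1))
          ≤ ∑ i ∈ Finset.range n, C * (V ‖eps n i ω‖ + V (a n)) :=
        Finset.sum_le_sum fun i _ => hterm i
      have h2 : ∑ i ∈ Finset.range n, C * (V ‖eps n i ω‖ + V (a n))
          = C * (∑ i ∈ Finset.range n, V ‖eps n i ω‖) + (n : ℝ) * (C * V (a n)) := by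
        rw [Finset.sum_congr rfl (fun i _ => mul_add C _ _), Finset.sum_add_distrib,
          ← Finset.mul_sum, Finset.sum_const, Finset.card_range, nsmul_eq_mul]
      calc (n : ℝ)⁻¹ * ∑ i ∈ Finset.range n, V (Metric.infDist (X n i ω) (f '' Set.Icc 0 1))
          ≤ (n : ℝ)⁻¹ * (C * (∑ i ∈ Finset.range n, V ‖eps n i ω‖) + (n : ℝ) * (C * V (a n))) := by
            apply mul_le_mul_of_nonneg_left _ (inv_nonneg.mpr hnR.le)
            rw [← h2]; exact h1
        _ = C * ((n : ℝ)⁻¹ * ∑ i ∈ Finset.range n, V ‖eps n i ω‖)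
              + ((n : ℝ)⁻¹ * (n : ℝ)) * (C * V (a n)) := by ring
        _ = C * ((n : ℝ)⁻¹ * ∑ i ∈ Finset.range n, V ‖eps n i ω‖) + C * V (a n) := by
            rw [inv_mul_cancel₀ hnR.ne', one_mul]
    exact (hfhatOpt n L ω hL0 f hfc hfvar).trans hsum
  -- V (a n) → 0
  have hVan : Tendsto (fun n => C * V (a n)) atTop (𝓝 0) := by
    have h1 : Tendsto a atTop (𝓝[Set.Ici 0] 0) :=
      tendsto_nhdsWithin_of_tendsto_nhds_of_eventually_within _ haLim
        (Filter.Eventually.of_forall fun n => (ha n).le)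
    have h2 : Tendsto (fun n => V (a n)) atTop (𝓝 0) := by
      have := hVcont0.tendsto.comp h1
      rwa [hV0] at this
    have := h2.const_mul C
    simpa using this
  have hev : ∀ᶠ n in atTop, C * V (a n) ≤ δ / 2 :=
    (hVan.eventually (eventually_le_nhds (by linarith : (0:ℝ) < δ / 2)))
  have hδ' : (0:ℝ) < δ / (2 * C) := by positivity
  apply tendsto_of_tendsto_of_tendsto_of_le_of_le' tendsto_const_nhds
    (hnoise (δ / (2 * C)) hδ')
  · exact Filter.Eventually.of_forall fun n => zero_le
  · filter_upwards [hev, Filter.eventually_ge_atTop 1] with n hVn hn1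
    apply measure_mono
    intro ω hω
    simp only [Set.mem_setOf_eq] at hω ⊢
    have h1 := key n hn1 ω
    have h2 : δ ≤ C * ((n : ℝ)⁻¹ * ∑ i ∈ Finset.range n, V ‖eps n i ω‖) + δ / 2 := by
      have := hω.trans h1
      linarith
    have h3 : δ / 2 ≤ C * ((n : ℝ)⁻¹ * ∑ i ∈ Finset.range n, V ‖eps n i ω‖) := by linarith
    rw [div_le_iff₀ (by positivity : (0:ℝ) < 2 * C)] at *
    calc δ ≤ C * ((n : ℝ)⁻¹ * ∑ i ∈ Finset.range n, V ‖eps n i ω‖) * 2 := by linarith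
      _ = ((n : ℝ)⁻¹ * ∑ i ∈ Finset.range n, V ‖eps n i ω‖) * (2 * C) := by ring
end

section
/- Let (f_n)_{n≥1} be a sequence of curves converging uniformly on [0,1] to a curve φ, and let (ν_n)_{n≥1} be probability measures on [0,1] × ℝ^d converging weakly to a probability measure ν. Assume that for every n, ν_n is supported on the set {(t,z) ∈ [0,1] × ℝ^d : |z − f_n(t)| = min_{s∈[0,1]} |z − f_n(s)|}, i.e. ν_n gives this set full measure. Then ν({(t,z) : |z − φ(t)| = min_{s∈[0,1]} |z − φ(s)|}) = 1. -/
open MeasureTheory Filter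
open scoped ENNReal NNReal InnerProductSpace Topology BoundedContinuousFunction

/-- If curves `f n` converge uniformly on `[0,1]` to a curve `φ`,
and probability measures `ν n` on `[0,1] × ℝ^d` converge weakly to `ν`, with each
`ν n` giving full measure to the set
`{(t,z) | |z - f n t| = min_{s ∈ [0,1]} |z - f n s|}`, then `ν` gives full measure
to `{(t,z) | |z - φ t| = min_{s ∈ [0,1]} |z - φ s|}`. -/
theorem statement_18 {d : ℕ}
    (f : ℕ → ℝ → EuclideanSpace ℝ (Fin d)) (φ : ℝ → EuclideanSpace ℝ (Fin d))
    (hf : ∀ n, ContinuousOn (f n) (Set.Icc 0 1)) (hφ : ContinuousOn φ (Set.Icc 0 1))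
    (hunif : TendstoUniformlyOn f φ atTop (Set.Icc 0 1))
    (ν : ℕ → Measure (unitInterval × EuclideanSpace ℝ (Fin d)))
    (νlim : Measure (unitInterval × EuclideanSpace ℝ (Fin d)))
    [∀ n, IsProbabilityMeasure (ν n)] [IsProbabilityMeasure νlim]
    (hweak : ∀ h : (unitInterval × EuclideanSpace ℝ (Fin d)) →ᵇ ℝ,
      Tendsto (fun n => ∫ p, h p ∂(ν n)) atTop (𝓝 (∫ p, h p ∂νlim)))
    (hsupp : ∀ n, ν n {p : unitInterval × EuclideanSpace ℝ (Fin d) |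
      dist p.2 (f n (p.1 : ℝ)) = Metric.infDist p.2 (f n '' Set.Icc 0 1)} = 1) :
    νlim {p : unitInterval × EuclideanSpace ℝ (Fin d) |
      dist p.2 (φ (p.1 : ℝ)) = Metric.infDist p.2 (φ '' Set.Icc 0 1)} = 1 := by
  classical
  set g : unitInterval × EuclideanSpace ℝ (Fin d) → ℝ :=
    fun p => dist p.2 (φ (p.1 : ℝ)) - Metric.infDist p.2 (φ '' Set.Icc 0 1) with hg
  have hφc : Continuous fun t : unitInterval => φ (t : ℝ) :=
    hφ.comp_continuous continuous_subtype_val (fun x => x.2)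
  have hgc : Continuous g := by
    apply Continuous.sub
    · exact continuous_snd.dist (hφc.comp continuous_fst)
    · exact (Metric.continuous_infDist_pt (φ '' Set.Icc 0 1)).comp continuous_snd
  have hgnn : ∀ p, 0 ≤ g p := by
    intro p
    have : Metric.infDist p.2 (φ '' Set.Icc 0 1) ≤ dist p.2 (φ (p.1 : ℝ)) :=
      Metric.infDist_le_dist_of_mem (Set.mem_image_of_mem φ p.1.2)
    simpa [hg] using this
  -- bounded continuous truncation
  set h : (unitInterval × EuclideanSpace ℝ (Fin d)) →ᵇ ℝ :=
    BoundedContinuousFunction.mkOfBound ⟨fun p => min (g p) 1, hgc.min continuous_const⟩ 1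
      (by
        intro x y
        simp only [ContinuousMap.coe_mk]
        rw [Real.dist_eq, abs_sub_le_iff]
        have hx0 : 0 ≤ min (g x) 1 := le_min (hgnn x) zero_le_one
        have hy0 : 0 ≤ min (g y) 1 := le_min (hgnn y) zero_le_one
        have hx1 : min (g x) 1 ≤ 1 := min_le_right _ _
        have hy1 : min (g y) 1 ≤ 1 := min_le_right _ _
        constructor <;> linarith) with hh
  have hcoe : ∀ p, h p = min (g p) 1 := fun p => rfl
  have hnn : ∀ p, 0 ≤ h p := fun p => le_min (hgnn p) zero_le_one
  -- compactness of the limit image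
  have hcompφ : IsCompact (φ '' Set.Icc 0 1) := isCompact_Icc.image_of_continuousOn hφ
  have hneφ : (φ '' Set.Icc 0 1).Nonempty :=
    (Set.nonempty_Icc.2 zero_le_one).image φ
  -- key estimate
  have key : ∀ ε : ℝ, 0 < ε → ∀ᶠ n in atTop, ∫ p, h p ∂(ν n) ≤ 2 * ε := by
    intro ε hε
    filter_upwards [Metric.tendstoUniformlyOn_iff.1 hunif ε hε] with n hn
    -- a.e. bound on h under ν n
    have hAclosed : IsClosed {p : unitInterval × EuclideanSpace ℝ (Fin d) |
        dist p.2 (f n (p.1 : ℝ)) = Metric.infDist p.2 (f n '' Set.Icc 0 1)} := by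
      have hfc : Continuous fun t : unitInterval => f n (t : ℝ) :=
        (hf n).comp_continuous continuous_subtype_val (fun x => x.2)
      exact isClosed_eq (continuous_snd.dist (hfc.comp continuous_fst))
        ((Metric.continuous_infDist_pt (f n '' Set.Icc 0 1)).comp continuous_snd)
    have hae : ∀ᵐ p ∂(ν n), p ∈ {p : unitInterval × EuclideanSpace ℝ (Fin d) |
        dist p.2 (f n (p.1 : ℝ)) = Metric.infDist p.2 (f n '' Set.Icc 0 1)} := by
      rw [ae_iff]
      have := (prob_compl_eq_zero_iff (μ := ν n) hAclosed.measurableSet).2 (hsupp n)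
      simpa [Set.compl_setOf] using this
    have haebd : ∀ᵐ p ∂(ν n), h p ≤ 2 * ε := by
      filter_upwards [hae] with p hp
      obtain ⟨y, hy, hyeq⟩ := hcompφ.exists_infDist_eq_dist hneφ p.2
      obtain ⟨s, hs, rfl⟩ := hy
      have h1 : dist p.2 (φ (p.1 : ℝ)) ≤ dist p.2 (f n (p.1 : ℝ)) + ε := by
        have hd := hn (p.1 : ℝ) p.1.2
        rw [dist_comm] at hd
        calc dist p.2 (φ (p.1 : ℝ)) ≤ dist p.2 (f n (p.1 : ℝ)) + dist (f n (p.1 : ℝ)) (φ (p.1 : ℝ)) :=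
              dist_triangle _ _ _
          _ ≤ dist p.2 (f n (p.1 : ℝ)) + ε := by linarith
      have h2 : dist p.2 (f n (p.1 : ℝ)) ≤ Metric.infDist p.2 (φ '' Set.Icc 0 1) + ε := by
        have hmem : f n s ∈ f n '' Set.Icc 0 1 := Set.mem_image_of_mem _ hs
        have : dist p.2 (f n (p.1 : ℝ)) ≤ dist p.2 (f n s) := by
          rw [hp]
          exact Metric.infDist_le_dist_of_mem hmem
        have h3 : dist p.2 (f n s) ≤ dist p.2 (φ s) + ε := by
          have hd2 := hn s hs
          calc dist p.2 (f n s) ≤ dist p.2 (φ s) + dist (φ s) (f n s) := dist_triangle _ _ _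
            _ ≤ dist p.2 (φ s) + ε := by linarith
        rw [hyeq]
        linarith
      have hgp : g p ≤ 2 * ε := by
        simp only [hg]
        linarith
      calc h p ≤ g p := min_le_left _ _
        _ ≤ 2 * ε := hgp
    have hint : ∫ p, h p ∂(ν n) ≤ ∫ _, 2 * ε ∂(ν n) :=
      integral_mono_ae (h.integrable (ν n)) (integrable_const _) haebd
    simpa using hint
  -- the limit integral is 0
  set L := ∫ p, h p ∂νlim with hL
  have hL0 : 0 ≤ L := integral_nonneg hnn
  have hLle : ∀ ε : ℝ, 0 < ε → L ≤ 2 * ε := fun ε hε =>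
    le_of_tendsto (hweak h) (key ε hε)
  have hLeq : L = 0 := by
    by_contra hne
    have hpos : 0 < L := lt_of_le_of_ne hL0 (Ne.symm hne)
    have := hLle (L / 4) (by linarith)
    linarith
  -- h = 0 a.e.
  have haez : h =ᵐ[νlim] 0 :=
    (integral_eq_zero_iff_of_nonneg hnn (h.integrable νlim)).1 (hL ▸ hLeq)
  have hnull : νlim {p | h p ≠ 0} = 0 := by
    have := haez
    rw [Filter.EventuallyEq, ae_iff] at this
    simpa using this
  -- conclude
  have hSclosed : IsClosed {p : unitInterval × EuclideanSpace ℝ (Fin d) |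
      dist p.2 (φ (p.1 : ℝ)) = Metric.infDist p.2 (φ '' Set.Icc 0 1)} :=
    isClosed_eq (continuous_snd.dist (hφc.comp continuous_fst))
      ((Metric.continuous_infDist_pt (φ '' Set.Icc 0 1)).comp continuous_snd)
  rw [← prob_compl_eq_zero_iff hSclosed.measurableSet]
  refine measure_mono_null ?_ hnull
  intro p hp
  simp only [Set.mem_compl_iff, Set.mem_setOf_eq] at hp ⊢
  intro hzero
  apply hp
  have : min (g p) 1 = 0 := hzero
  have hgz : g p = 0 := by
    rcases min_eq_iff.1 this with h1 | h1
    · exact h1.1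
    · linarith [h1.1]
  have := sub_eq_zero.1 hgz
  simpa [hg] using this
end

section
/- Let g, φ:[0,1]→ℝ^d be curves with 𝓛(g) < ∞ and ℋ¹(Im g) = 𝓛(g). If Im g ⊆ Im φ and 𝓛(φ) ≤ 𝓛(g), then Im φ = Im g and 𝓛(φ) = 𝓛(g). -/
open MeasureTheory Filter
open scoped ENNReal NNReal InnerProductSpace Topology

/-- The 1-dimensional Hausdorff measure of the image of a curve is bounded by its
variation. -/
lemma hausdorff_image_le_eVariationOn {d : ℕ} (f : ℝ → EuclideanSpace ℝ (Fin d)) :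
    μH[1] (f '' Set.Icc 0 1) ≤ eVariationOn f (Set.Icc 0 1) := by
  by_cases hfin : eVariationOn f (Set.Icc 0 1) = ⊤
  · simp [hfin]
  set S : Set ℝ := Set.Icc 0 1 with hS
  have h0S : (0 : ℝ) ∈ S := by simp [hS]
  have hbv : BoundedVariationOn f S := hfin
  have hlbv : LocallyBoundedVariationOn f S := hbv.locallyBoundedVariationOn
  set v : ℝ → ℝ := variationOnFromTo f S 0 with hv
  -- key Lipschitz estimate
  have key : ∀ x ∈ S, ∀ y ∈ S, dist (f x) (f y) ≤ dist (v x) (v y) := by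
    have main : ∀ x ∈ S, ∀ y ∈ S, x ≤ y → dist (f x) (f y) ≤ dist (v x) (v y) := by
      intro x hx y hy hxy
      have hadd : v x + variationOnFromTo f S x y = v y :=
        variationOnFromTo.add hlbv h0S hx hy
      have hsubbv : BoundedVariationOn f (S ∩ Set.Icc x y) :=
        fun h => hfin (eq_top_iff.2 (h ▸ eVariationOn.mono f Set.inter_subset_left))
      have hd : dist (f x) (f y) ≤ variationOnFromTo f S x y := by
        rw [variationOnFromTo.eq_of_le f S hxy]
        exact hsubbv.dist_le ⟨hx, le_rfl, hxy⟩ ⟨hy, hxy, le_rfl⟩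
      have : variationOnFromTo f S x y ≤ dist (v x) (v y) := by
        rw [Real.dist_eq, ← hadd]
        simpa using le_abs_self _
      exact hd.trans this
    intro x hx y hy
    rcases le_total x y with h | h
    · exact main x hx y hy h
    · rw [dist_comm (f x), dist_comm (v x)]; exact main y hy x hx h
  -- factorization through a 1-Lipschitz map
  set ψ : ℝ → EuclideanSpace ℝ (Fin d) := f ∘ Function.invFunOn v S with hψ
  have hlip : LipschitzOnWith 1 ψ (v '' S) := by
    apply LipschitzOnWith.of_dist_le_mul
    rintro s ⟨x, hx, rfl⟩ t ⟨y, hy, rfl⟩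
    have hx' : ∃ a ∈ S, v a = v x := ⟨x, hx, rfl⟩
    have hy' : ∃ a ∈ S, v a = v y := ⟨y, hy, rfl⟩
    have := key _ (Function.invFunOn_mem hx') _ (Function.invFunOn_mem hy')
    rw [Function.invFunOn_eq hx', Function.invFunOn_eq hy'] at this
    simpa [hψ] using this
  have himg : f '' S = ψ '' (v '' S) := by
    ext z
    constructor
    · rintro ⟨x, hx, rfl⟩
      refine ⟨v x, ⟨x, hx, rfl⟩, ?_⟩
      have hx' : ∃ a ∈ S, v a = v x := ⟨x, hx, rfl⟩
      have := key _ (Function.invFunOn_mem hx') x hx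
      rw [Function.invFunOn_eq hx'] at this
      simp only [dist_self] at this
      have : dist (ψ (v x)) (f x) = 0 := le_antisymm (by simpa [hψ] using this) dist_nonneg
      exact dist_eq_zero.1 this
    · rintro ⟨s, ⟨x, hx, rfl⟩, rfl⟩
      exact ⟨_, Function.invFunOn_mem (⟨x, hx, rfl⟩ : ∃ a ∈ S, v a = v x), rfl⟩
  -- the image of v is inside [0, L]
  set L : ℝ := (eVariationOn f S).toReal with hL
  have hvsub : v '' S ⊆ Set.Icc 0 L := by
    rintro s ⟨x, hx, rfl⟩
    refine ⟨variationOnFromTo.nonneg_of_le f S hx.1, ?_⟩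
    rw [hv, variationOnFromTo.eq_of_le f S hx.1, hL]
    exact ENNReal.toReal_mono hfin (eVariationOn.mono f Set.inter_subset_left)
  calc μH[1] (f '' S) = μH[1] (ψ '' (v '' S)) := by rw [himg]
    _ ≤ (1 : ℝ≥0) ^ (1 : ℝ) * μH[1] (v '' S) :=
        hlip.hausdorffMeasure_image_le zero_le_one
    _ = μH[1] (v '' S) := by simp
    _ ≤ μH[1] (Set.Icc 0 L) := measure_mono hvsub
    _ = eVariationOn f S := by
        rw [MeasureTheory.hausdorffMeasure_real, Real.volume_Icc, sub_zero, hL,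
          ENNReal.ofReal_toReal hfin]

/-- Let `g, φ : [0,1] → ℝ^d` be curves with `𝓛(g) < ∞` and
`ℋ¹(Im g) = 𝓛(g)`. If `Im g ⊆ Im φ` and `𝓛(φ) ≤ 𝓛(g)`, then `Im φ = Im g` and
`𝓛(φ) = 𝓛(g)`. -/
theorem statement_19 {d : ℕ}
    (g φ : ℝ → EuclideanSpace ℝ (Fin d))
    (hg : ContinuousOn g (Set.Icc 0 1)) (hφ : ContinuousOn φ (Set.Icc 0 1))
    (hrect : eVariationOn g (Set.Icc 0 1) ≠ ⊤)
    (hlen : μH[1] (g '' Set.Icc 0 1) = eVariationOn g (Set.Icc 0 1))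
    (hsub : g '' Set.Icc 0 1 ⊆ φ '' Set.Icc 0 1)
    (hle : eVariationOn φ (Set.Icc 0 1) ≤ eVariationOn g (Set.Icc 0 1)) :
    φ '' Set.Icc 0 1 = g '' Set.Icc 0 1 ∧
      eVariationOn φ (Set.Icc 0 1) = eVariationOn g (Set.Icc 0 1) := by
  set S : Set ℝ := Set.Icc 0 1 with hS
  set K : Set (EuclideanSpace ℝ (Fin d)) := g '' S with hK
  have hKcpt : IsCompact K := isCompact_Icc.image_of_continuousOn hg
  have hKne : K.Nonempty := ⟨g 0, 0, by simp [hS], rfl⟩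
  have hφH : μH[1] (φ '' S) ≤ eVariationOn g S :=
    (hausdorff_image_le_eVariationOn φ).trans hle
  have hKfin : μH[1] K ≠ ⊤ := by rw [hK, hlen]; exact hrect
  -- the difference has measure zero
  have hdiff : μH[1] (φ '' S \ K) = 0 := by
    have := measure_diff (μ := μH[1]) hsub hKcpt.measurableSet.nullMeasurableSet hKfin
    rw [this, hK, hlen]
    exact tsub_eq_zero_of_le hφH
  -- show φ '' S ⊆ K
  have himg : φ '' S = K := by
    refine Set.Subset.antisymm ?_ hsub
    intro x hx
    by_contra hxK
    have hδ : 0 < Metric.infDist x K :=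
      (hKcpt.isClosed.notMem_iff_infDist_pos hKne).1 hxK
    set δ := Metric.infDist x K with hδdef
    -- φ '' S is connected
    have hconn : IsPreconnected (φ '' S) := isPreconnected_Icc.image φ hφ
    have hconn2 : IsPreconnected ((fun y => Metric.infDist y K) '' (φ '' S)) :=
      hconn.image _ (Metric.lipschitz_infDist_pt K).continuous.continuousOn
    have h0mem : (0 : ℝ) ∈ (fun y => Metric.infDist y K) '' (φ '' S) := by
      obtain ⟨k, hk⟩ := hKne
      exact ⟨k, hsub hk, Metric.infDist_zero_of_mem hk⟩
    have hδmem : δ ∈ (fun y => Metric.infDist y K) '' (φ '' S) := ⟨x, hx, rfl⟩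
    have hIcc : Set.Icc 0 δ ⊆ (fun y => Metric.infDist y K) '' (φ '' S) :=
      hconn2.Icc_subset h0mem hδmem
    -- Ioc 0 δ is within the image of the difference
    have hIoc : Set.Ioc 0 δ ⊆ (fun y => Metric.infDist y K) '' (φ '' S \ K) := by
      rintro t ⟨ht0, htδ⟩
      obtain ⟨y, hy, hyt⟩ := hIcc ⟨ht0.le, htδ⟩
      refine ⟨y, ⟨hy, fun hyK => ?_⟩, hyt⟩
      simp only [Metric.infDist_zero_of_mem hyK] at hyt
      exact ht0.ne hyt
    have hcontra : μH[1] (Set.Ioc (0 : ℝ) δ) ≤ 0 := by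
      calc μH[1] (Set.Ioc (0 : ℝ) δ)
          ≤ μH[1] ((fun y => Metric.infDist y K) '' (φ '' S \ K)) := measure_mono hIoc
        _ ≤ (1 : ℝ≥0) ^ (1 : ℝ) * μH[1] (φ '' S \ K) :=
            (Metric.lipschitz_infDist_pt K).hausdorffMeasure_image_le zero_le_one _
        _ = 0 := by rw [hdiff]; simp
    rw [MeasureTheory.hausdorffMeasure_real, Real.volume_Ioc, sub_zero] at hcontra
    simp only [le_zero_iff, ENNReal.ofReal_eq_zero] at hcontra
    linarith
  refine ⟨himg, le_antisymm hle ?_⟩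
  calc eVariationOn g S = μH[1] K := hlen.symm
    _ = μH[1] (φ '' S) := by rw [himg]
    _ ≤ eVariationOn φ S := hausdorff_image_le_eVariationOn φ
end
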